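/- arXiv:2009.00801 — 7 statements merged into one kernel-verified Lean document; each statement's English description precedes it below -/
import Mathlib

section
/- If f : R^p → R is convex with a unique minimum point y on the closed convex set T = D⁻¹(S), where D is a matrix and S a closed convex set, then for all sufficiently large ρ > 0, the penalized objective h_ρ(x) = f(x) + (ρ/2)·dist(Dx, S)² is coercive and attains its minimum value. -/
open Filter Metric Topology Bornology

private lemma aux_comb {p : ℕ} {f : EuclideanSpace ℝ (Fin p) → ℝ}
    (hf : ConvexOn ℝ Set.univ f) (y x : EuclideanSpace ℝ (Fin p)) {lam : ℝ}
    (h0 : 0 ≤ lam) (h1 : lam ≤ 1) :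
    f (y + lam • (x - y)) ≤ (1 - lam) * f y + lam * f x := by
  have h := hf.2 (Set.mem_univ y) (Set.mem_univ x) (by linarith : (0:ℝ) ≤ 1 - lam) h0
    (by ring)
  have he : y + lam • (x - y) = (1 - lam) • y + lam • x := by module
  rw [he]; exact h

private lemma aux_lb {p : ℕ} {f : EuclideanSpace ℝ (Fin p) → ℝ}
    (hf : ConvexOn ℝ Set.univ f) (hfc : Continuous f) (y : EuclideanSpace ℝ (Fin p)) :
    ∃ M, 0 ≤ M ∧ ∀ x, f y - M * (‖x - y‖ + 1) ≤ f x := by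
  obtain ⟨z0, hz0m, hz0⟩ := (isCompact_closedBall y 1).exists_isMinOn
    ⟨y, mem_closedBall_self one_pos.le⟩ hfc.continuousOn
  set b := f z0 with hb
  have hball : ∀ z ∈ closedBall y 1, b ≤ f z := fun z hz => hz0 hz
  refine ⟨max 0 (f y - b), le_max_left _ _, fun x => ?_⟩
  set M := max 0 (f y - b) with hM
  have hM0 : 0 ≤ M := le_max_left _ _
  have hMfb : f y - b ≤ M := le_max_right _ _
  rcases le_or_gt ‖x - y‖ 1 with hle | hlt
  · have hbx : b ≤ f x := hball x (by rwa [mem_closedBall, dist_eq_norm])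
    nlinarith [norm_nonneg (x - y)]
  · set r := ‖x - y‖ with hr
    have hr0 : (0:ℝ) < r := lt_trans one_pos hlt
    set lam := r⁻¹ with hlam
    have hlam0 : 0 < lam := inv_pos.2 hr0
    have hlamr : lam * r = 1 := inv_mul_cancel₀ hr0.ne'
    have hlam1 : lam ≤ 1 := by
      rw [hlam]
      exact inv_le_one_of_one_le₀ hlt.le
    have key := aux_comb hf y x hlam0.le hlam1
    have hzb : b ≤ f (y + lam • (x - y)) := by
      apply hball
      rw [mem_closedBall, dist_eq_norm]
      have : y + lam • (x - y) - y = lam • (x - y) := by abel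
      rw [this, norm_smul, Real.norm_eq_abs, abs_of_pos hlam0, ← hr, hlamr]
    nlinarith

private lemma aux_pen {p m : ℕ} (D : EuclideanSpace ℝ (Fin p) →L[ℝ] EuclideanSpace ℝ (Fin m))
    {S : Set (EuclideanSpace ℝ (Fin m))} (hconv : Convex ℝ S)
    {y : EuclideanSpace ℝ (Fin p)} (hyT : D y ∈ S) (x : EuclideanSpace ℝ (Fin p))
    {lam : ℝ} (h0 : 0 ≤ lam) (h1 : lam ≤ 1) :
    infDist (D (y + lam • (x - y))) S ≤ lam * infDist (D x) S := by
  rcases eq_or_lt_of_le h0 with h0' | h0'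
  · simp [← h0', infDist_zero_of_mem hyT]
  refine le_of_forall_pos_le_add fun ε hε => ?_
  have hSne : S.Nonempty := ⟨D y, hyT⟩
  have hdx : infDist (D x) S < infDist (D x) S + ε / lam := lt_add_of_pos_right _ (by positivity)
  obtain ⟨s, hsS, hs⟩ := (infDist_lt_iff hSne).mp hdx
  have hwS : (1 - lam) • (D y) + lam • s ∈ S := hconv hyT hsS (by linarith) h0 (by ring)
  have hle := infDist_le_dist_of_mem (x := D (y + lam • (x - y))) hwS
  have hDz : D (y + lam • (x - y)) = D y + lam • (D x - D y) := by
    rw [map_add, map_smul, map_sub]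
  have hdist : dist (D (y + lam • (x - y))) ((1 - lam) • (D y) + lam • s)
      = lam * dist (D x) s := by
    rw [hDz, dist_eq_norm, dist_eq_norm]
    have : D y + lam • (D x - D y) - ((1 - lam) • (D y) + lam • s) = lam • (D x - s) := by
      module
    rw [this, norm_smul, Real.norm_eq_abs, abs_of_pos h0']
  rw [hdist] at hle
  calc infDist (D (y + lam • (x - y))) S ≤ lam * dist (D x) s := hle
    _ ≤ lam * (infDist (D x) S + ε / lam) := by
        exact mul_le_mul_of_nonneg_left hs.le h0
    _ = lam * infDist (D x) S + ε := by field_simp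

set_option maxHeartbeats 1000000 in
/-- If `f` is convex with a unique minimum point `y` on the closed convex set
`T = D⁻¹(S)`, then for all sufficiently large `ρ > 0` the penalized objective
`h_ρ(x) = f(x) + (ρ/2) dist(Dx,S)²` is coercive and attains its minimum value. -/
theorem stmt1 {p m : ℕ} (f : EuclideanSpace ℝ (Fin p) → ℝ)
    (hf : ConvexOn ℝ Set.univ f)
    (D : EuclideanSpace ℝ (Fin p) →L[ℝ] EuclideanSpace ℝ (Fin m))
    (S : Set (EuclideanSpace ℝ (Fin m))) (hS : IsClosed S) (hconv : Convex ℝ S)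
    (y : EuclideanSpace ℝ (Fin p)) (hyT : D y ∈ S)
    (hymin : ∀ x, D x ∈ S → f y ≤ f x)
    (hyuniq : ∀ x, D x ∈ S → f x = f y → x = y) :
    ∃ ρ₀ : ℝ, 0 < ρ₀ ∧ ∀ ρ ≥ ρ₀,
      Filter.Tendsto (fun x => f x + (ρ / 2) * (Metric.infDist (D x) S) ^ 2)
        (Filter.cocompact (EuclideanSpace ℝ (Fin p))) Filter.atTop ∧
      ∃ z, ∀ x, f z + (ρ / 2) * (Metric.infDist (D z) S) ^ 2 ≤
          f x + (ρ / 2) * (Metric.infDist (D x) S) ^ 2 := by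
  classical
  have hfc : Continuous f := continuousOn_univ.mp (hf.continuousOn isOpen_univ)
  obtain ⟨M, hM0, hMb⟩ := aux_lb hf hfc y
  refine ⟨1, one_pos, fun ρ hρ => ?_⟩
  have hρ0 : (0:ℝ) < ρ := lt_of_lt_of_le one_pos hρ
  set h : EuclideanSpace ℝ (Fin p) → ℝ := fun x => f x + (ρ / 2) * (infDist (D x) S) ^ 2 with hh
  have hpen_nonneg : ∀ x, 0 ≤ (ρ / 2) * (infDist (D x) S) ^ 2 := fun x => by positivity
  have hcont : Continuous h :=
    hfc.add (continuous_const.mul (((continuous_infDist_pt S).comp D.continuous).pow 2))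
  have hcoer : Tendsto h (cocompact (EuclideanSpace ℝ (Fin p))) atTop := by
    rw [← Metric.cobounded_eq_cocompact, Filter.tendsto_atTop]
    by_contra hcon
    push_neg at hcon
    obtain ⟨c, hc⟩ := hcon
    have hc' : ∃ᶠ x in cobounded (EuclideanSpace ℝ (Fin p)), h x < c := hc
    set L := cobounded (EuclideanSpace ℝ (Fin p)) ⊓ 𝓟 {x | h x < c} with hL
    haveI hLne : L.NeBot := Filter.frequently_mem_iff_neBot.mp hc'
    have hhc : ∀ᶠ x in L, h x < c :=
      eventually_inf_principal.mpr (Eventually.of_forall fun x hx => hx)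
    have tn : Tendsto (fun x : EuclideanSpace ℝ (Fin p) => ‖x - y‖) L atTop := by
      refine tendsto_atTop_mono (fun x => norm_sub_norm_le x y) ?_
      exact (tendsto_atTop_add_const_right _ (-‖y‖)
        (tendsto_norm_cobounded_atTop.mono_left inf_le_left)).congr fun x => by ring
    set g : EuclideanSpace ℝ (Fin p) → EuclideanSpace ℝ (Fin p) := fun x => ‖x - y‖⁻¹ • (x - y) with hg
    have hgs : ∀ᶠ x in L, g x ∈ sphere (0:EuclideanSpace ℝ (Fin p)) 1 := by
      filter_upwards [tn.eventually_ge_atTop 1] with x hx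
      have hx0 : (0:ℝ) < ‖x - y‖ := lt_of_lt_of_le one_pos hx
      rw [mem_sphere_zero_iff_norm, hg, norm_smul, Real.norm_eq_abs,
        abs_of_pos (inv_pos.2 hx0)]
      exact inv_mul_cancel₀ hx0.ne'
    have hmaple : map g L ≤ 𝓟 (sphere (0:EuclideanSpace ℝ (Fin p)) 1) := le_principal_iff.2 (mem_map.2 hgs)
    obtain ⟨d, hdsph, hd⟩ := (isCompact_sphere (0:EuclideanSpace ℝ (Fin p)) 1).exists_clusterPt hmaple
    set φ : EuclideanSpace ℝ (Fin p) → EuclideanSpace ℝ (Fin p) := fun x => y + (1:ℝ) • g x with hφ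
    have hcl : ClusterPt (y + (1:ℝ) • d) (map φ L) := by
      have hcont' : ContinuousAt (fun e : EuclideanSpace ℝ (Fin p) => y + (1:ℝ) • e) d := by fun_prop
      have := hd.map hcont' tendsto_map
      rwa [Filter.map_map] at this
    -- eventual bounds
    have hlam0 : Tendsto (fun x : EuclideanSpace ℝ (Fin p) => ‖x - y‖⁻¹) L (𝓝 0) := tn.inv_tendsto_atTop
    set K : ℝ := |c - f y| + 2 * M + 1 with hK
    have hK0 : 0 < K := by positivity
    have key1 : ∀ ε > (0:ℝ), ∀ᶠ x in L, f (φ x) ≤ f y + ε := by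
      intro ε hε
      have hev : ∀ᶠ x in L, ‖x - y‖⁻¹ * (c - f y) < ε := by
        have : Tendsto (fun x : EuclideanSpace ℝ (Fin p) => ‖x - y‖⁻¹ * (c - f y)) L (𝓝 0) := by
          simpa using hlam0.mul_const (c - f y)
        exact this.eventually_lt_const hε
      filter_upwards [tn.eventually_ge_atTop 1, hhc, hev] with x hx1 hxc hxε
      have hx0 : (0:ℝ) < ‖x - y‖ := lt_of_lt_of_le one_pos hx1
      set lam := ‖x - y‖⁻¹ with hlam
      have hl0 : 0 ≤ lam := (inv_pos.2 hx0).le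
      have hl1 : lam ≤ 1 := inv_le_one_of_one_le₀ hx1
      have hφx : φ x = y + lam • (x - y) := by
        simp only [hφ, hg, one_smul, hlam]
      rw [hφx]
      have hcb := aux_comb hf y x hl0 hl1
      have hfx : f x < c := lt_of_le_of_lt (le_add_of_nonneg_right (hpen_nonneg x)) hxc
      nlinarith [mul_le_mul_of_nonneg_left hfx.le hl0]
    have key2 : ∀ ε > (0:ℝ), ∀ᶠ x in L, infDist (D (φ x)) S ≤ ε := by
      intro ε hε
      filter_upwards [tn.eventually_ge_atTop (max 1 (2 * K / ρ / ε ^ 2)), hhc]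
        with x hx1 hxc
      have hx1' : (1:ℝ) ≤ ‖x - y‖ := le_trans (le_max_left _ _) hx1
      have hx0 : (0:ℝ) < ‖x - y‖ := lt_of_lt_of_le one_pos hx1'
      set r := ‖x - y‖ with hrr
      set lam := r⁻¹ with hlam
      have hl0 : 0 ≤ lam := (inv_pos.2 hx0).le
      have hl1 : lam ≤ 1 := inv_le_one_of_one_le₀ hx1'
      have hlamr : lam * r = 1 := inv_mul_cancel₀ hx0.ne'
      have hφx : φ x = y + lam • (x - y) := by
        simp only [hφ, hg, one_smul, hlam, hrr]
      rw [hφx]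
      have hP := aux_pen D hconv hyT x hl0 hl1
      refine le_trans hP ?_
      -- quadratic bound
      have hfxlb : f y - M * (r + 1) ≤ f x := hMb x
      have hq : (ρ / 2) * (infDist (D x) S) ^ 2 ≤ c - f x := by
        rw [hh] at hxc; dsimp at hxc; linarith
      have hq2 : (infDist (D x) S) ^ 2 ≤ (2 / ρ) * (K * r) := by
        have h1 : c - f x ≤ c - f y + M * (r + 1) := by linarith
        have h2 : c - f y + M * (r + 1) ≤ K * r := by
          have ha : c - f y ≤ |c - f y| := le_abs_self _
          have hb' : |c - f y| ≤ |c - f y| * r := le_mul_of_one_le_right (abs_nonneg _) hx1'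
          nlinarith
        have := le_trans (le_trans hq h1) h2
        rw [div_mul_eq_mul_div, le_div_iff₀ hρ0]
        nlinarith [this]
      have hid0 : 0 ≤ infDist (D x) S := infDist_nonneg
      have hsq : (lam * infDist (D x) S) ^ 2 ≤ ε ^ 2 := by
        have hx2 : 2 * K / ρ / ε ^ 2 ≤ r := le_trans (le_max_right _ _) hx1
        have hrε : 2 * K / ρ ≤ r * ε ^ 2 := by
          rw [div_le_iff₀ (by positivity : (0:ℝ) < ε ^ 2)] at hx2
          linarith
        have hexp : (lam * infDist (D x) S) ^ 2 = lam ^ 2 * (infDist (D x) S) ^ 2 := by ring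
        rw [hexp]
        have h3 : lam ^ 2 * (infDist (D x) S) ^ 2 ≤ lam ^ 2 * ((2 / ρ) * (K * r)) := by
          exact mul_le_mul_of_nonneg_left hq2 (by positivity)
        refine le_trans h3 ?_
        have hlr : lam = r⁻¹ := rfl
        rw [hlr]
        rw [show (r⁻¹) ^ 2 * ((2 / ρ) * (K * r)) = (2 * K / ρ) / r by
          field_simp]
        rw [div_le_iff₀ hx0]
        nlinarith [sq_nonneg ε]
      nlinarith [mul_nonneg hl0 hid0, hε]
    -- extract conclusions at the cluster point
    set z := y + (1:ℝ) • d with hz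
    have hfz : f z ≤ f y := by
      refine le_of_forall_pos_le_add fun ε hε => ?_
      have hsmem : {w : EuclideanSpace ℝ (Fin p) | f w ≤ f y + ε} ∈ map φ L :=
        mem_map.2 ((key1 ε hε).mono fun x hx => hx)
      have hclosed : IsClosed {w : EuclideanSpace ℝ (Fin p) | f w ≤ f y + ε} :=
        isClosed_le hfc continuous_const
      have := clusterPt_iff_forall_mem_closure.mp hcl _ hsmem
      rwa [hclosed.closure_eq] at this
    have hzS : D z ∈ S := by
      have hid : infDist (D z) S = 0 := by
        refine le_antisymm ?_ infDist_nonneg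
        refine le_of_forall_pos_le_add fun ε hε => ?_
        have hsmem : {w : EuclideanSpace ℝ (Fin p) | infDist (D w) S ≤ ε} ∈ map φ L :=
          mem_map.2 ((key2 ε hε).mono fun x hx => hx)
        have hclosed : IsClosed {w : EuclideanSpace ℝ (Fin p) | infDist (D w) S ≤ ε} :=
          isClosed_le ((continuous_infDist_pt S).comp D.continuous) continuous_const
        have := clusterPt_iff_forall_mem_closure.mp hcl _ hsmem
        rw [hclosed.closure_eq] at this
        simpa using this
      exact (hS.mem_iff_infDist_zero ⟨D y, hyT⟩).mpr hid
    have heq : f z = f y := le_antisymm hfz (hymin z hzS)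
    have hzy : z = y := hyuniq z hzS heq
    have hd0 : d = 0 := by
      have : (1:ℝ) • d = 0 := by
        have := hzy; rw [hz] at this
        have h2 : y + (1:ℝ) • d - y = y - y := by rw [this]
        simpa using h2
      simpa using this
    rw [hd0] at hdsph
    simp [mem_sphere_zero_iff_norm] at hdsph
  exact ⟨hcoer, hcont.exists_forall_le hcoer⟩
end

section
/- Let A be a p×p positive semidefinite matrix and D an m×p matrix. If u^t A u > 0 for every nonzero u with Du = 0, then there exists ρ > 0 such that A + ρ D^t D is positive definite. -/
open Matrix
/-- If `A` is positive semidefinite and `uᵀAu > 0` for every nonzero `u` with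
`Du = 0`, then there exists `ρ > 0` such that `A + ρ DᵀD` is positive definite. -/
theorem stmt2 {p m : ℕ} (A : Matrix (Fin p) (Fin p) ℝ) (hA : A.PosSemidef)
    (D : Matrix (Fin m) (Fin p) ℝ)
    (h : ∀ u : Fin p → ℝ, u ≠ 0 → D.mulVec u = 0 → 0 < u ⬝ᵥ A.mulVec u) :
    ∃ ρ : ℝ, 0 < ρ ∧ (A + ρ • (Dᵀ * D)).PosDef := by
  refine ⟨1, one_pos, posDef_iff_dotProduct_mulVec.mpr ⟨?_, ?_⟩⟩
  · have h1 : ((1:ℝ) • (Dᵀ * D)).IsHermitian := by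
      have h2 := isHermitian_conjTranspose_mul_self D
      unfold Matrix.IsHermitian at *
      simp only [conjTranspose_smul]
      simp_all
    exact hA.1.add h1
  · intro x hx
    have key : (x ⬝ᵥ (A + (1:ℝ) • (Dᵀ * D)).mulVec x)
        = x ⬝ᵥ A.mulVec x + (D.mulVec x) ⬝ᵥ (D.mulVec x) := by
      simp [add_mulVec, dotProduct_add, ← mulVec_mulVec, dotProduct_mulVec,
        vecMul_transpose]
    have hstar : (star x : Fin p → ℝ) = x := by simp
    rw [hstar, key]
    rcases eq_or_ne (D.mulVec x) 0 with hD | hD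
    · have := h x hx hD
      simp only [hD, dotProduct_zero]
      linarith
    · have h1 : 0 ≤ x ⬝ᵥ A.mulVec x := by
        have := hA.dotProduct_mulVec_nonneg x
        simpa using this
      have h2 : 0 < (D.mulVec x) ⬝ᵥ (D.mulVec x) := by
        have hz := dotProduct_self_eq_zero (v := D.mulVec x)
        have hnn : 0 ≤ (D.mulVec x) ⬝ᵥ (D.mulVec x) := by
          simpa using dotProduct_self_star_nonneg (D.mulVec x)
        rcases hnn.lt_or_eq with h' | h'
        · exact h'
        · exact absurd (hz.mp h'.symm) hD
      linarith
end

section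
/- Suppose S is closed convex and f is L-smooth and μ-strongly convex. Then h_ρ(x) = f(x) + (ρ/2)dist(Dx,S)² has a unique minimizer z_ρ, and the proximal distance MM iterates satisfy h_ρ(x_n) - h_ρ(z_ρ) ≤ [1 - μ²/(2(L + ρ‖D‖²)²)]^n · (h_ρ(x_0) - h_ρ(z_ρ)). -/
open scoped RealInnerProductSpace

section helpers

variable {F : Type*} [NormedAddCommGroup F] [InnerProductSpace ℝ F]

/-- obtuse angle property of the projection -/
lemma stmt8_obtuse {S : Set F} (hconv : Convex ℝ S)
    {P : F → F} (hP : ∀ x, P x ∈ S ∧ ∀ s ∈ S, ‖x - P x‖ ≤ ‖x - s‖)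
    (u : F) : ∀ s ∈ S, ⟪u - P u, s - P u⟫ ≤ 0 := by
  haveI : Nonempty S := ⟨⟨P u, (hP u).1⟩⟩
  have key : ‖u - P u‖ = ⨅ w : S, ‖u - w‖ := by
    refine le_antisymm (le_ciInf fun w => (hP u).2 w w.2) ?_
    exact ciInf_le ⟨0, fun _ ⟨_, h⟩ => h ▸ norm_nonneg _⟩ (⟨P u, (hP u).1⟩ : S)
  exact (norm_eq_iInf_iff_real_inner_le_zero hconv (hP u).1).1 key

omit [InnerProductSpace ℝ F] in
lemma stmt8_infDist_eq {S : Set F}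
    {P : F → F} (hP : ∀ x, P x ∈ S ∧ ∀ s ∈ S, ‖x - P x‖ ≤ ‖x - s‖)
    (u : F) : Metric.infDist u S = ‖u - P u‖ := by
  refine le_antisymm ?_ ?_
  · simpa [dist_eq_norm] using Metric.infDist_le_dist_of_mem (hP u).1
  · rw [Metric.infDist_eq_iInf]
    haveI : Nonempty S := ⟨⟨P u, (hP u).1⟩⟩
    exact le_ciInf fun w => by simpa [dist_eq_norm] using (hP u).2 w w.2

/-- lower quadratic bound for squared distance -/
lemma stmt8_qlow {S : Set F} (hconv : Convex ℝ S)
    {P : F → F} (hP : ∀ x, P x ∈ S ∧ ∀ s ∈ S, ‖x - P x‖ ≤ ‖x - s‖)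
    (u v : F) :
    ‖u - P u‖ ^ 2 + 2 * ⟪u - P u, v - u⟫ ≤ (Metric.infDist v S) ^ 2 := by
  have hobt := stmt8_obtuse hconv hP u (P v) (hP v).1
  have hcs : ⟪v - P v, u - P u⟫ ≤ ‖v - P v‖ * ‖u - P u‖ := real_inner_le_norm _ _
  have hsplit : ⟪v - P v, u - P u⟫ =
      ⟪u - P u, v - u⟫ + ‖u - P u‖ ^ 2 - ⟪u - P u, P v - P u⟫ := by
    have hv : v - P v = (v - u) + (u - P u) - (P v - P u) := by abel
    rw [hv, inner_sub_left, inner_add_left, real_inner_comm (v - u), real_inner_comm (u - P u),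
      real_inner_self_eq_norm_sq, real_inner_comm (P v - P u)]
  rw [stmt8_infDist_eq hP]
  nlinarith [sq_nonneg (‖v - P v‖ - ‖u - P u‖), norm_nonneg (v - P v), norm_nonneg (u - P u)]

variable [CompleteSpace F]

/-- descent lemma for L-Lipschitz gradient -/
lemma stmt8_descent (f : F → ℝ) (f' : F → F)
    (hgrad : ∀ x, HasGradientAt f (f' x) x)
    (L : ℝ) (hLip : ∀ x y, ‖f' x - f' y‖ ≤ L * ‖x - y‖)
    (x y : F) : f y ≤ f x + ⟪f' x, y - x⟫ + L / 2 * ‖y - x‖ ^ 2 := by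
  set d := y - x with hd
  have hline : ∀ t : ℝ, HasDerivAt (fun t : ℝ => x + t • d) d t := by
    intro t
    simpa using ((hasDerivAt_id t).smul_const d).const_add x
  have hphi : ∀ t : ℝ, HasDerivAt (fun t : ℝ => f (x + t • d)) ⟪f' (x + t • d), d⟫ t := by
    intro t
    have := (hgrad (x + t • d)).hasFDerivAt.comp_hasDerivAt t (hline t)
    exact this
  set ψ : ℝ → ℝ := fun t => f (x + t • d) - t * ⟪f' x, d⟫ - L / 2 * t ^ 2 * ‖d‖ ^ 2 with hψ
  have hψd : ∀ t : ℝ, HasDerivAt ψ (⟪f' (x + t • d), d⟫ - ⟪f' x, d⟫ - L * t * ‖d‖ ^ 2) t := by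
    intro t
    have h1 : HasDerivAt (fun t : ℝ => t * ⟪f' x, d⟫) ⟪f' x, d⟫ t := by
      simpa using (hasDerivAt_id t).mul_const ⟪f' x, d⟫
    have h2 : HasDerivAt (fun t : ℝ => L / 2 * t ^ 2 * ‖d‖ ^ 2) (L * t * ‖d‖ ^ 2) t := by
      have := ((hasDerivAt_pow 2 t).const_mul (L / 2)).mul_const (‖d‖ ^ 2)
      have e : L * t * ‖d‖ ^ 2 = L / 2 * (((2:ℕ):ℝ) * t ^ (2 - 1)) * ‖d‖ ^ 2 := by
        rw [show (2:ℕ) - 1 = 1 from rfl]; push_cast; ring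
      rw [e]; exact this
    exact ((hphi t).sub h1).sub h2
  have hmono : ψ 1 ≤ ψ 0 := by
    have hd0 : ∀ t ∈ Set.Icc (0:ℝ) 1, (⟪f' (x + t • d), d⟫ - ⟪f' x, d⟫ - L * t * ‖d‖ ^ 2) ≤ 0 := by
      intro t ht
      have h1 : ⟪f' (x + t • d) - f' x, d⟫ ≤ ‖f' (x + t • d) - f' x‖ * ‖d‖ :=
        real_inner_le_norm _ _
      have h2 : ‖f' (x + t • d) - f' x‖ ≤ L * (t * ‖d‖) := by
        have := hLip (x + t • d) x
        simpa [norm_smul, Real.norm_eq_abs, abs_of_nonneg ht.1] using this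
      have h4 : ⟪f' (x + t • d) - f' x, d⟫ = ⟪f' (x + t • d), d⟫ - ⟪f' x, d⟫ :=
        inner_sub_left _ _ _
      nlinarith [norm_nonneg d, norm_nonneg (f' (x + t • d) - f' x)]
    have hanti : AntitoneOn ψ (Set.Icc (0:ℝ) 1) := by
      apply antitoneOn_of_deriv_nonpos (convex_Icc 0 1)
      · exact (fun t _ => (hψd t).differentiableAt.continuousAt.continuousWithinAt :
          ContinuousOn ψ _)
      · intro t ht
        exact (hψd t).differentiableAt.differentiableWithinAt
      · intro t ht
        rw [(hψd t).deriv]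
        exact hd0 t (Set.mem_Icc_of_Ioo (by simpa using ht))
    exact hanti (Set.mem_Icc.2 ⟨le_refl 0, zero_le_one⟩)
      (Set.mem_Icc.2 ⟨zero_le_one, le_refl 1⟩) zero_le_one
  have hxy : x + d = y := by simp [hd]
  have h0 : ψ 0 = f x := by simp [hψ]
  have h1 : ψ 1 = f y - ⟪f' x, d⟫ - L / 2 * ‖d‖ ^ 2 := by simp [hψ, hxy]
  rw [h0, h1] at hmono
  linarith

end helpers

set_option maxHeartbeats 1000000 in
/-- For `S` closed convex and `f` `L`-smooth and `μ`-strongly convex, the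
objective `h_ρ(x) = f(x) + (ρ/2)dist(Dx,S)²` has a unique minimizer `z_ρ`, and the
proximal distance MM iterates converge linearly:
`h_ρ(x_n) - h_ρ(z_ρ) ≤ [1 - μ²/(2(L + ρ‖D‖²)²)]ⁿ (h_ρ(x_0) - h_ρ(z_ρ))`. -/
theorem stmt8 {p m : ℕ} (S : Set (EuclideanSpace ℝ (Fin m)))
    (hS : IsClosed S) (hconv : Convex ℝ S) (hne : S.Nonempty)
    (P : EuclideanSpace ℝ (Fin m) → EuclideanSpace ℝ (Fin m))
    (hP : ∀ x, P x ∈ S ∧ ∀ s ∈ S, ‖x - P x‖ ≤ ‖x - s‖)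
    (f : EuclideanSpace ℝ (Fin p) → ℝ)
    (f' : EuclideanSpace ℝ (Fin p) → EuclideanSpace ℝ (Fin p))
    (hgrad : ∀ x, HasGradientAt f (f' x) x)
    (L μ : ℝ) (hL : 0 < L) (hμ : 0 < μ)
    (hLip : ∀ x y, ‖f' x - f' y‖ ≤ L * ‖x - y‖)
    (hsc : ∀ x y, f y ≥ f x + ⟪f' x, y - x⟫ + (μ / 2) * ‖y - x‖ ^ 2)
    (ρ : ℝ) (hρ : 0 < ρ)
    (D : EuclideanSpace ℝ (Fin p) →L[ℝ] EuclideanSpace ℝ (Fin m))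
    (x : ℕ → EuclideanSpace ℝ (Fin p))
    (hMM : ∀ n, ∀ w, f (x (n + 1)) + (ρ / 2) * ‖D (x (n + 1)) - P (D (x n))‖ ^ 2 ≤
        f w + (ρ / 2) * ‖D w - P (D (x n))‖ ^ 2) :
    (∃! z, ∀ w, f z + (ρ / 2) * (Metric.infDist (D z) S) ^ 2 ≤
        f w + (ρ / 2) * (Metric.infDist (D w) S) ^ 2) ∧
      ∀ z, (∀ w, f z + (ρ / 2) * (Metric.infDist (D z) S) ^ 2 ≤
          f w + (ρ / 2) * (Metric.infDist (D w) S) ^ 2) →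
        ∀ n : ℕ,
          (f (x n) + (ρ / 2) * (Metric.infDist (D (x n)) S) ^ 2) -
              (f z + (ρ / 2) * (Metric.infDist (D z) S) ^ 2) ≤
            (1 - μ ^ 2 / (2 * (L + ρ * ‖D‖ ^ 2) ^ 2)) ^ n *
              ((f (x 0) + (ρ / 2) * (Metric.infDist (D (x 0)) S) ^ 2) -
                (f z + (ρ / 2) * (Metric.infDist (D z) S) ^ 2)) := by
  -- the objective
  set hh : EuclideanSpace ℝ (Fin p) → ℝ :=
    fun w => f w + (ρ / 2) * (Metric.infDist (D w) S) ^ 2 with hhdef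
  -- strong convexity of hh
  have hsch : ∀ a w, hh a + (⟪f' a, w - a⟫ + ρ * ⟪D a - P (D a), D w - D a⟫)
      + (μ / 2) * ‖w - a‖ ^ 2 ≤ hh w := by
    intro a w
    have h1 := hsc a w
    have h2 := stmt8_qlow hconv hP (D a) (D w)
    have h3 : (ρ / 2) * (‖D a - P (D a)‖ ^ 2 + 2 * ⟪D a - P (D a), D w - D a⟫) ≤
        (ρ / 2) * (Metric.infDist (D w) S) ^ 2 :=
      mul_le_mul_of_nonneg_left h2 (by positivity)
    have h4 : Metric.infDist (D a) S = ‖D a - P (D a)‖ := stmt8_infDist_eq hP (D a)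
    simp only [hhdef]
    rw [h4]
    nlinarith [h1, h3]
  -- gradient vector of hh
  set G : EuclideanSpace ℝ (Fin p) → EuclideanSpace ℝ (Fin p) :=
    fun a => f' a + ρ • (ContinuousLinearMap.adjoint D) (D a - P (D a)) with hGdef
  have hschG : ∀ a w, hh a + ⟪G a, w - a⟫ + (μ / 2) * ‖w - a‖ ^ 2 ≤ hh w := by
    intro a w
    have := hsch a w
    have hinner : ⟪G a, w - a⟫ = ⟪f' a, w - a⟫ + ρ * ⟪D a - P (D a), D w - D a⟫ := by
      simp only [hGdef, inner_add_left, real_inner_smul_left]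
      congr 1
      rw [ContinuousLinearMap.adjoint_inner_left, map_sub]
    linarith [this, hinner.le, hinner.ge]
  -- continuity of hh
  have hfc : Continuous f := by
    refine continuous_iff_continuousAt.2 fun a => ?_
    exact (hgrad a).differentiableAt.continuousAt
  have hhc : Continuous hh := by
    apply hfc.add
    exact continuous_const.mul (((Metric.continuous_infDist_pt S).comp D.continuous).pow 2)
  -- existence of a minimizer
  have hexists : ∃ z, ∀ w, hh z ≤ hh w := by
    set a0 := x 0
    set R := 2 * ‖G a0‖ / μ with hR
    have hR0 : 0 ≤ R := by positivity
    obtain ⟨z, hzK, hzmin⟩ := (isCompact_closedBall a0 R).exists_isMinOn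
      ⟨a0, Metric.mem_closedBall_self hR0⟩ hhc.continuousOn
    refine ⟨z, fun w => ?_⟩
    by_cases hw : w ∈ Metric.closedBall a0 R
    · exact hzmin hw
    · have hr : R < ‖w - a0‖ := by
        simpa [Metric.mem_closedBall, dist_eq_norm] using hw
      have h1 := hschG a0 w
      have h2 : -(‖G a0‖ * ‖w - a0‖) ≤ ⟪G a0, w - a0⟫ := by
        have := abs_real_inner_le_norm (G a0) (w - a0)
        linarith [neg_abs_le (⟪G a0, w - a0⟫ : ℝ)]
      have hzle : hh z ≤ hh a0 := hzmin (Metric.mem_closedBall_self hR0)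
      have hGR : 2 * ‖G a0‖ = μ * R := by
        rw [hR]; field_simp
      have hr0 : 0 < ‖w - a0‖ := lt_of_le_of_lt hR0 hr
      have key : ‖G a0‖ * ‖w - a0‖ ≤ μ / 2 * ‖w - a0‖ ^ 2 := by
        nlinarith [mul_lt_mul_of_pos_right hr (mul_pos (half_pos hμ) hr0)]
      have c1 : hh a0 + -(‖G a0‖ * ‖w - a0‖) + μ / 2 * ‖w - a0‖ ^ 2 ≤ hh w := by
        linarith [h1, h2]
      have c0 : hh a0 ≤ hh a0 + -(‖G a0‖ * ‖w - a0‖) + μ / 2 * ‖w - a0‖ ^ 2 := by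
        linarith [key]
      exact hzle.trans (c0.trans c1)
  obtain ⟨z₀, hz₀⟩ := hexists
  constructor
  · -- existence and uniqueness
    refine ⟨z₀, hz₀, ?_⟩
    intro z₁ hz₁
    -- midpoint argument
    set mm := (2⁻¹ : ℝ) • (z₁ + z₀) with hmm
    have hsum : (z₁ - mm) + (z₀ - mm) = 0 := by
      rw [hmm]
      module
    have h1 := hsch mm z₁
    have h2 := hsch mm z₀
    have hlin : ⟪f' mm, z₁ - mm⟫ + ⟪f' mm, z₀ - mm⟫ = 0 := by
      rw [← inner_add_right, hsum, inner_zero_right]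
    have hlin2 : ⟪D mm - P (D mm), D z₁ - D mm⟫ + ⟪D mm - P (D mm), D z₀ - D mm⟫ = 0 := by
      rw [← inner_add_right]
      have : (D z₁ - D mm) + (D z₀ - D mm) = D ((z₁ - mm) + (z₀ - mm)) := by
        rw [map_add, map_sub, map_sub]
      rw [this, hsum, map_zero, inner_zero_right]
    have hlin2' : ρ * ⟪D mm - P (D mm), D z₁ - D mm⟫
        + ρ * ⟪D mm - P (D mm), D z₀ - D mm⟫ = 0 := by
      rw [← mul_add, hlin2, mul_zero]
    have hm1 : hh z₁ ≤ hh mm := hz₁ mm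
    have hm0 : hh z₀ ≤ hh mm := hz₀ mm
    have hsumineq : μ / 2 * (‖z₁ - mm‖ ^ 2 + ‖z₀ - mm‖ ^ 2) ≤ 0 := by
      have expand : μ / 2 * (‖z₁ - mm‖ ^ 2 + ‖z₀ - mm‖ ^ 2)
          = μ / 2 * ‖z₁ - mm‖ ^ 2 + μ / 2 * ‖z₀ - mm‖ ^ 2 := by ring
      rw [expand]
      have s1 : hh mm + hh mm + (μ / 2 * ‖z₁ - mm‖ ^ 2 + μ / 2 * ‖z₀ - mm‖ ^ 2) ≤
          hh z₁ + hh z₀ := by linarith [h1, h2, hlin, hlin2']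
      have s2 : hh z₁ + hh z₀ ≤ hh mm + hh mm := by linarith [hm1, hm0]
      linarith only [le_trans s1 s2]
    have hnn : ‖z₁ - mm‖ ^ 2 + ‖z₀ - mm‖ ^ 2 ≤ 0 := by
      by_contra hcon
      push_neg at hcon
      exact (mul_pos (half_pos hμ) hcon).not_ge hsumineq
    have hnz : ‖z₁ - mm‖ ^ 2 = 0 := le_antisymm (by nlinarith [sq_nonneg ‖z₀ - mm‖]) (sq_nonneg _)
    have hnz0 : ‖z₀ - mm‖ ^ 2 = 0 := le_antisymm (by nlinarith [sq_nonneg ‖z₁ - mm‖]) (sq_nonneg _)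
    have hz1m : z₁ = mm := by
      have : z₁ - mm = 0 := by
        simpa [pow_eq_zero_iff] using hnz
      rwa [sub_eq_zero] at this
    have hz0m : z₀ = mm := by
      have : z₀ - mm = 0 := by
        simpa [pow_eq_zero_iff] using hnz0
      rwa [sub_eq_zero] at this
    rw [hz1m, hz0m]
  · -- convergence
    intro z hz n
    rcases subsingleton_or_nontrivial (EuclideanSpace ℝ (Fin p)) with hsub | hnt
    · have e1 : x n = z := Subsingleton.elim _ _
      have e2 : x 0 = z := Subsingleton.elim _ _
      rw [e1, e2]
      simp
    · -- μ ≤ L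
      obtain ⟨a, b, hab⟩ := exists_pair_ne (EuclideanSpace ℝ (Fin p))
      have hab' : (0:ℝ) < ‖a - b‖ := by
        simpa [norm_pos_iff, sub_eq_zero] using hab
      have hμL : μ ≤ L := by
        have h1 := hsc a b
        have h2 := hsc b a
        have h3 : ⟪f' a, b - a⟫ + ⟪f' b, a - b⟫ = -⟪f' a - f' b, a - b⟫ := by
          rw [inner_sub_left]
          have : ⟪f' a, b - a⟫ = -⟪f' a, a - b⟫ := by
            rw [← inner_neg_right]; congr 1; abel
          rw [this]; ring
        have h4 : ⟪f' a - f' b, a - b⟫ ≤ ‖f' a - f' b‖ * ‖a - b‖ := real_inner_le_norm _ _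
        have h5 := hLip a b
        have h6 : ‖b - a‖ = ‖a - b‖ := norm_sub_rev b a
        have h6sq : ‖b - a‖ ^ 2 = ‖a - b‖ ^ 2 := by rw [h6]
        have h7 : ‖f' a - f' b‖ * ‖a - b‖ ≤ L * ‖a - b‖ * ‖a - b‖ :=
          mul_le_mul_of_nonneg_right h5 (norm_nonneg (a - b))
        nlinarith [mul_pos hab' hab', h1, h2, h3, h4, h6sq, h7]
      obtain ⟨κ, hκdef⟩ : ∃ κ, κ = L + ρ * ‖D‖ ^ 2 := ⟨_, rfl⟩
      have hκ : 0 < κ := by rw [hκdef]; positivity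
      have hμκ : μ ≤ κ := le_trans hμL (by nlinarith [sq_nonneg ‖D‖, hρ.le])
      obtain ⟨t, ht⟩ : ∃ t, t = μ / κ := ⟨_, rfl⟩
      have ht0 : 0 < t := ht ▸ div_pos hμ hκ
      have ht1 : t ≤ 1 := ht ▸ (div_le_one hκ).2 hμκ
      have htκ : t * κ = μ := by rw [ht]; field_simp
      -- one-step contraction
      have step : ∀ k, hh (x (k + 1)) - hh z ≤ (1 - t) * (hh (x k) - hh z) := by
        intro k
        obtain ⟨c, hc⟩ : ∃ c, c = P (D (x k)) := ⟨_, rfl⟩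
        obtain ⟨d, hd⟩ : ∃ d, d = z - x k := ⟨_, rfl⟩
        obtain ⟨w, hw⟩ : ∃ w, w = x k + t • d := ⟨_, rfl⟩
        have hcS : c ∈ S := hc ▸ (hP (D (x k))).1
        -- h(x_{k+1}) ≤ f w + ρ/2 ‖D w − c‖²
        have e1 : hh (x (k + 1)) ≤ f w + (ρ / 2) * ‖D w - c‖ ^ 2 := by
          have hle : Metric.infDist (D (x (k + 1))) S ≤ ‖D (x (k + 1)) - c‖ := by
            simpa [dist_eq_norm] using Metric.infDist_le_dist_of_mem hcS
          have hsq : (Metric.infDist (D (x (k + 1))) S) ^ 2 ≤ ‖D (x (k + 1)) - c‖ ^ 2 :=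
            pow_le_pow_left₀ Metric.infDist_nonneg hle 2
          have hMMk := hMM k w
          rw [← hc] at hMMk
          simp only [hhdef]
          nlinarith [hsq, hMMk]
        -- descent lemma for f at x k
        have e2 : f w ≤ f (x k) + t * ⟪f' (x k), d⟫ + L / 2 * (t ^ 2 * ‖d‖ ^ 2) := by
          have := stmt8_descent f f' hgrad L hLip (x k) w
          have hwa : w - x k = t • d := by rw [hw]; abel
          rw [hwa, real_inner_smul_right, norm_smul, Real.norm_eq_abs,
            mul_pow, sq_abs] at this
          linarith
        -- quadratic expansion
        have e3 : ‖D w - c‖ ^ 2 = ‖D (x k) - c‖ ^ 2 + 2 * t * ⟪D (x k) - c, D d⟫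
            + t ^ 2 * ‖D d‖ ^ 2 := by
          have hDw : D w - c = (D (x k) - c) + t • (D d) := by
            rw [hw, map_add, map_smul]
            abel
          rw [hDw, norm_add_sq_real, real_inner_smul_right, norm_smul, Real.norm_eq_abs,
            mul_pow, sq_abs]
          ring
        have e4 : ‖D d‖ ^ 2 ≤ ‖D‖ ^ 2 * ‖d‖ ^ 2 := by
          have := D.le_opNorm d
          nlinarith [norm_nonneg (D d), norm_nonneg d, norm_nonneg D]
        have e5 : Metric.infDist (D (x k)) S = ‖D (x k) - c‖ := by
          rw [hc]; exact stmt8_infDist_eq hP (D (x k))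
        -- strong convexity at x k towards z
        have e6 : ⟪f' (x k), d⟫ + ρ * ⟪D (x k) - c, D d⟫ ≤
            hh z - hh (x k) - (μ / 2) * ‖d‖ ^ 2 := by
          have h9 := hsch (x k) z
          have h1 : z - x k = d := hd.symm
          have h2 : D z - D (x k) = D d := by rw [hd, map_sub]
          rw [h1, h2, ← hc] at h9
          linarith [h9]
        have e7 : t * (⟪f' (x k), d⟫ + ρ * ⟪D (x k) - c, D d⟫) ≤
            t * (hh z - hh (x k) - (μ / 2) * ‖d‖ ^ 2) :=
          mul_le_mul_of_nonneg_left e6 ht0.le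
        have e8 : t ^ 2 * κ = t * μ := by rw [sq, mul_assoc, htκ]
        -- combine
        have e9 : hh (x (k + 1)) ≤ hh (x k) + t * (⟪f' (x k), d⟫ + ρ * ⟪D (x k) - c, D d⟫)
            + (κ / 2) * (t ^ 2 * ‖d‖ ^ 2) := by
          have hρt : (ρ / 2) * (t ^ 2 * ‖D d‖ ^ 2) ≤ (ρ / 2) * (t ^ 2 * (‖D‖ ^ 2 * ‖d‖ ^ 2)) := by
            apply mul_le_mul_of_nonneg_left _ (by positivity)
            exact mul_le_mul_of_nonneg_left e4 (sq_nonneg t)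
          have hha : hh (x k) = f (x k) + (ρ / 2) * ‖D (x k) - c‖ ^ 2 := by
            simp only [hhdef]; rw [e5]
          calc hh (x (k + 1)) ≤ f w + (ρ / 2) * ‖D w - c‖ ^ 2 := e1
            _ = f w + (ρ / 2) * (‖D (x k) - c‖ ^ 2 + 2 * t * ⟪D (x k) - c, D d⟫
                + t ^ 2 * ‖D d‖ ^ 2) := by rw [e3]
            _ ≤ hh (x k) + t * (⟪f' (x k), d⟫ + ρ * ⟪D (x k) - c, D d⟫)
                + (κ / 2) * (t ^ 2 * ‖d‖ ^ 2) := by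
              rw [hha, hκdef]
              nlinarith [e2, hρt]
        have e10 : (κ / 2) * (t ^ 2 * ‖d‖ ^ 2) = t * ((μ / 2) * ‖d‖ ^ 2) := by
          linear_combination (‖d‖ ^ 2 / 2) * e8
        rw [e10] at e9
        have e11 : hh (x (k + 1)) ≤ hh (x k) + t * (hh z - hh (x k) - (μ / 2) * ‖d‖ ^ 2)
            + t * ((μ / 2) * ‖d‖ ^ 2) :=
          e9.trans (add_le_add_left (add_le_add_right e7 (hh (x k))) _)
        have e12 : hh (x k) + t * (hh z - hh (x k) - (μ / 2) * ‖d‖ ^ 2)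
            + t * ((μ / 2) * ‖d‖ ^ 2) = (1 - t) * (hh (x k) - hh z) + hh z := by ring
        linarith only [e11.trans e12.le]
      -- rate comparison
      obtain ⟨r, hr⟩ : ∃ r, r = 1 - μ ^ 2 / (2 * κ ^ 2) := ⟨_, rfl⟩
      have hrate : 1 - t ≤ r := by
        rw [hr, ht]
        have h1 : μ ^ 2 / (2 * κ ^ 2) ≤ μ / κ := by
          rw [div_le_div_iff₀ (by positivity) (by positivity)]
          nlinarith [mul_le_mul_of_nonneg_left hμκ (mul_pos hμ hκ).le, mul_pos hμ hκ]
        linarith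
      have hr0 : 0 ≤ r := le_trans (by linarith) hrate
      have hz' : ∀ w, hh z ≤ hh w := hz
      have hΔ : ∀ k, 0 ≤ hh (x k) - hh z := fun k => sub_nonneg.2 (hz' (x k))
      -- induction
      have main : ∀ k, hh (x k) - hh z ≤ r ^ k * (hh (x 0) - hh z) := by
        intro k
        induction k with
        | zero => simp
        | succ k ih =>
          calc hh (x (k + 1)) - hh z ≤ (1 - t) * (hh (x k) - hh z) := step k
            _ ≤ r * (hh (x k) - hh z) := mul_le_mul_of_nonneg_right hrate (hΔ k)
            _ ≤ r * (r ^ k * (hh (x 0) - hh z)) := mul_le_mul_of_nonneg_left ih hr0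
            _ = r ^ (k + 1) * (hh (x 0) - hh z) := by ring
      rw [← hκdef, ← hr]
      exact main n
end

section
/- The k-th order statistic of n real-valued functions f_1,…,f_n satisfies the inclusion–exclusion formula f_{(k)}(x) = Σ_{j=k}^{n} Σ_{|S|=j} (-1)^{j-k} · C(j-1, k-1) · max{f_i(x) : i ∈ S}, where f_{(1)} ≤ … ≤ f_{(n)} are the sorted values. -/
/-- The `k`-th smallest value (0-indexed) among `v 0, …, v (n-1)`. -/
noncomputable def orderStat {n : ℕ} (v : Fin n → ℝ) (k : Fin n) : ℝ :=
  ((Finset.univ.val.map v).sort (· ≤ ·))[k]'(by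
    simp [Multiset.length_sort])

/-- Maximum of `g` over a finite set, defaulting to `0` on the empty set. -/
noncomputable def finsetMax {ι : Type*} (S : Finset ι) (g : ι → ℝ) : ℝ :=
  if h : S.Nonempty then S.sup' h g else 0

private lemma alt_sum_real (m : ℕ) :
    ∑ i ∈ Finset.range (m + 1), (-1 : ℝ) ^ i * (m.choose i) =
      if m = 0 then 1 else 0 := by
  have h := Int.alternating_sum_range_choose (n := m)
  have h2 : (((∑ i ∈ Finset.range (m + 1), ((-1) ^ i * m.choose i : ℤ)) : ℤ) : ℝ)
      = ∑ i ∈ Finset.range (m + 1), (-1 : ℝ) ^ i * (m.choose i) := by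
    push_cast
    rfl
  rw [← h2, h]
  split <;> simp

private lemma binom_aux (k p : ℕ) :
    ∑ j ∈ Finset.range (p + 1),
        (p.choose j : ℝ) * ((-1 : ℝ) ^ (j - k) * (j.choose k)) =
      if p = k then 1 else 0 := by
  rcases lt_or_ge p k with h | h
  · rw [if_neg (by omega)]
    refine Finset.sum_eq_zero fun j hj => ?_
    rw [Finset.mem_range] at hj
    rw [Nat.choose_eq_zero_of_lt (show j < k by omega)]
    simp
  · have hsub : Finset.Ico k (p + 1) ⊆ Finset.range (p + 1) := by
      rw [Finset.range_eq_Ico]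
      exact Finset.Ico_subset_Ico (Nat.zero_le _) le_rfl
    rw [← Finset.sum_subset hsub (fun j hj hj' => ?_)]
    · rw [Finset.sum_Ico_eq_sum_range]
      have hpk : p + 1 - k = (p - k) + 1 := by omega
      rw [hpk]
      have hterm : ∀ i ∈ Finset.range (p - k + 1),
          (p.choose (k + i) : ℝ) * ((-1 : ℝ) ^ (k + i - k) * ((k + i).choose k))
          = (p.choose k : ℝ) * ((-1 : ℝ) ^ i * ((p - k).choose i)) := by
        intro i hi
        rw [Finset.mem_range] at hi
        have hle : k + i ≤ p := by omega
        have hmul := Nat.choose_mul (n := p) (Nat.le_add_right k i)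
        have h1 : k + i - k = i := by omega
        rw [h1] at hmul ⊢
        calc (p.choose (k + i) : ℝ) * ((-1 : ℝ) ^ i * ((k + i).choose k))
            = ((p.choose (k + i) * (k + i).choose k : ℕ) : ℝ) * (-1 : ℝ) ^ i := by
              push_cast; ring
          _ = ((p.choose k * (p - k).choose i : ℕ) : ℝ) * (-1 : ℝ) ^ i := by rw [hmul]
          _ = (p.choose k : ℝ) * ((-1 : ℝ) ^ i * ((p - k).choose i)) := by
              push_cast; ring
      rw [Finset.sum_congr rfl hterm, ← Finset.mul_sum, alt_sum_real]
      rcases eq_or_ne p k with rfl | hne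
      · simp
      · rw [if_neg (by omega), if_neg hne, mul_zero]
    · rw [Finset.mem_range] at hj
      rw [Finset.mem_Ico] at hj'
      rw [Nat.choose_eq_zero_of_lt (show j < k by omega)]
      simp

private lemma finsetMax_top {n : ℕ} {w : Fin n → ℝ} (hw : Monotone w)
    (p : Fin n) (A : Finset (Fin n)) (hA : ∀ a ∈ A, a ≤ p) :
    finsetMax (insert p A) w = w p := by
  rw [finsetMax, dif_pos (Finset.insert_nonempty _ _)]
  apply le_antisymm
  · refine Finset.sup'_le _ _ fun i hi => ?_
    rcases Finset.mem_insert.mp hi with h | h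
    · exact h ▸ le_rfl
    · exact hw (hA i h)
  · exact Finset.le_sup' _ (Finset.mem_insert_self p A)

private lemma finsetMax_image {ι κ : Type*} [DecidableEq κ] (e : ι → κ)
    (S : Finset ι) (g : κ → ℝ) :
    finsetMax (S.image e) g = finsetMax S (g ∘ e) := by
  unfold finsetMax
  by_cases h : S.Nonempty
  · rw [dif_pos (h.image e), dif_pos h, Finset.sup'_image]
  · rw [Finset.not_nonempty_iff_eq_empty] at h
    subst h
    simp

/-- The key combinatorial identity, for a monotone tuple `w`. -/
private lemma key_lemma {n : ℕ} (k : Fin n) (w : Fin n → ℝ) (hw : Monotone w) :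
    ∑ S ∈ (Finset.univ : Finset (Fin n)).powerset,
        (-1 : ℝ) ^ (S.card - (k.1 + 1)) * ((S.card - 1).choose k.1) * finsetMax S w
      = w k := by
  classical
  show ∑ S ∈ (Finset.univ : Finset (Fin n)).powerset,
      ((-1 : ℝ) ^ (S.card - (k.1 + 1)) * ((S.card - 1).choose k.1)) * finsetMax S w = w k
  set c : ℕ → ℝ := fun j => (-1 : ℝ) ^ (j - (k.1 + 1)) * ((j - 1).choose k.1) with hc
  -- restrict to nonempty sets
  have h0 : ∀ S ∈ (Finset.univ : Finset (Fin n)).powerset,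
      S ∉ Finset.univ.powerset.filter (fun T : Finset (Fin n) => T.Nonempty) →
      c S.card * finsetMax S w = 0 := by
    intro S hS hS'
    have : ¬ S.Nonempty := by
      intro h
      exact hS' (Finset.mem_filter.mpr ⟨hS, h⟩)
    rw [finsetMax, dif_neg this, mul_zero]
  have hstep1 : ∑ S ∈ (Finset.univ : Finset (Fin n)).powerset,
      c S.card * finsetMax S w
      = ∑ S ∈ Finset.univ.powerset.filter (fun T : Finset (Fin n) => T.Nonempty),
          c S.card * finsetMax S w :=
    (Finset.sum_subset (Finset.filter_subset _ _) h0).symm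
  -- group by maximum element
  set mx : Finset (Fin n) → Fin n := fun T => T.max.getD k with hmx
  have hmx_eq : ∀ (T : Finset (Fin n)) (h : T.Nonempty), mx T = T.max' h := by
    intro T h
    rw [hmx]
    simp only
    rw [← Finset.coe_max' h]
    rfl
  have hstep2 : ∑ S ∈ Finset.univ.powerset.filter (fun T : Finset (Fin n) => T.Nonempty),
      c S.card * finsetMax S w
      = ∑ x ∈ (Finset.univ : Finset (Fin n)).sigma
            (fun p => (Finset.Iio p).powerset),
          c (insert x.1 x.2).card * finsetMax (insert x.1 x.2) w := by
    refine Finset.sum_nbij'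
      (i := fun T => (⟨mx T, T.erase (mx T)⟩ : Σ _ : Fin n, Finset (Fin n)))
      (j := fun x => insert x.1 x.2) ?_ ?_ ?_ ?_ ?_
    · intro T hT
      have hne := (Finset.mem_filter.mp hT).2
      rw [Finset.mem_sigma]
      refine ⟨Finset.mem_univ _, Finset.mem_powerset.mpr fun a ha => ?_⟩
      rw [Finset.mem_erase] at ha
      have h2 : a < mx T := by
        rw [hmx_eq T hne]
        refine lt_of_le_of_ne (Finset.le_max' T a ha.2) ?_
        rw [hmx_eq T hne] at ha
        exact ha.1
      exact Finset.mem_Iio.mpr h2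
    · intro x hx
      exact Finset.mem_filter.mpr ⟨Finset.mem_powerset.mpr (Finset.subset_univ _),
        Finset.insert_nonempty _ _⟩
    · intro T hT
      have hne := (Finset.mem_filter.mp hT).2
      show insert (mx T) (T.erase (mx T)) = T
      rw [hmx_eq T hne]
      exact Finset.insert_erase (Finset.max'_mem _ _)
    · intro x hx
      rw [Finset.mem_sigma, Finset.mem_powerset] at hx
      have hxIio : ∀ a ∈ x.2, a < x.1 := fun a ha => Finset.mem_Iio.mp (hx.2 ha)
      have hpx : x.1 ∉ x.2 := fun h => lt_irrefl _ (hxIio _ h)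
      have hmax : mx (insert x.1 x.2) = x.1 := by
        rw [hmx_eq _ (Finset.insert_nonempty _ _)]
        apply le_antisymm
        · refine Finset.max'_le _ _ _ fun a ha => ?_
          rcases Finset.mem_insert.mp ha with h | h
          · exact h.le
          · exact (hxIio _ h).le
        · exact Finset.le_max' _ _ (Finset.mem_insert_self _ _)
      obtain ⟨p, A⟩ := x
      show (⟨mx (insert p A), (insert p A).erase (mx (insert p A))⟩
          : Σ _ : Fin n, Finset (Fin n)) = ⟨p, A⟩
      simp only at hmax hpx
      rw [hmax, Finset.erase_insert hpx]
    · intro T hT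
      have hne := (Finset.mem_filter.mp hT).2
      have h3 : insert (mx T) (T.erase (mx T)) = T := by
        rw [hmx_eq T hne]
        exact Finset.insert_erase (Finset.max'_mem _ _)
      show c T.card * finsetMax T w
        = c (insert (mx T) (T.erase (mx T))).card * finsetMax (insert (mx T) (T.erase (mx T))) w
      rw [h3]
  rw [hstep1, hstep2, Finset.sum_sigma]
  -- evaluate inner sums
  have hinner : ∀ p : Fin n,
      ∑ A ∈ (Finset.Iio p).powerset, c (insert p A).card * finsetMax (insert p A) w
      = (if p.1 = k.1 then 1 else 0) * w p := by
    intro p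
    have hA : ∀ A ∈ (Finset.Iio p).powerset,
        c (insert p A).card * finsetMax (insert p A) w = c (A.card + 1) * w p := by
      intro A hA
      rw [Finset.mem_powerset] at hA
      have hAlt : ∀ a ∈ A, a < p := fun a ha => Finset.mem_Iio.mp (hA ha)
      have hpA : p ∉ A := fun h => lt_irrefl _ (hAlt _ h)
      rw [Finset.card_insert_of_notMem hpA,
        finsetMax_top hw p A (fun a ha => (hAlt a ha).le)]
    rw [Finset.sum_congr rfl hA,
      Finset.sum_powerset_apply_card (f := fun m => c (m + 1) * w p)]
    rw [show (Finset.Iio p).card = p.1 from by simp]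
    have : ∀ m ∈ Finset.range (p.1 + 1),
        (p.1.choose m) • (c (m + 1) * w p)
        = ((p.1.choose m : ℝ) * ((-1 : ℝ) ^ (m - k.1) * (m.choose k.1))) * w p := by
      intro m hm
      rw [hc]
      simp only [nsmul_eq_mul]
      have h1 : m + 1 - (k.1 + 1) = m - k.1 := by omega
      have h2 : m + 1 - 1 = m := by omega
      rw [h1, h2]
      ring
    rw [Finset.sum_congr rfl this, ← Finset.sum_mul, binom_aux k.1 p.1]
  rw [Finset.sum_congr rfl (fun p _ => hinner p)]
  rw [Finset.sum_congr rfl (fun p (_ : p ∈ Finset.univ) => by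
    rw [show (if p.1 = k.1 then (1:ℝ) else 0) = if p = k then 1 else 0 by
      simp [Fin.val_inj]])]
  simp [Finset.sum_ite_eq' Finset.univ k (fun p => w p)]

/-- the inclusion–exclusion formula for order statistics:
`f_{(k)}(x) = Σ_{j=k}^{n} Σ_{|S|=j} (-1)^{j-k} C(j-1,k-1) max{f_i(x) : i ∈ S}`
(here `k : Fin n` is the 0-indexed version of the 1-indexed `k` in the formula). -/
theorem stmt9 {X : Type*} {n : ℕ} (f : Fin n → X → ℝ) (k : Fin n) (x : X) :
    orderStat (fun i => f i x) k =
      ∑ j ∈ Finset.Icc (k.1 + 1) n,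
        ∑ S ∈ Finset.univ.powerset.filter (fun S : Finset (Fin n) => S.card = j),
          (-1 : ℝ) ^ (j - (k.1 + 1)) * ((j - 1).choose k.1) *
            finsetMax S (fun i => f i x) := by
  classical
  set v : Fin n → ℝ := fun i => f i x with hv
  set σ := Tuple.sort v with hσ
  have hmono : Monotone (v ∘ σ) := Tuple.monotone_sort v
  -- Step C : the order statistic is (v ∘ σ) k
  have hC : orderStat v k = (v ∘ σ) k := by
    have hlist : (Finset.univ.val.map v).sort (· ≤ ·) = List.ofFn (v ∘ σ) := by
      have hperm : ((Finset.univ.val.map v).sort (· ≤ ·)).Perm (List.ofFn (v ∘ σ)) := by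
        apply Multiset.coe_eq_coe.mp
        rw [Multiset.sort_eq]
        have h1 : Finset.univ.val.map v = Finset.univ.val.map (v ∘ ⇑σ) := by
          conv_lhs => rw [← Multiset.map_univ_val_equiv (σ : Fin n ≃ Fin n)]
          rw [Multiset.map_map]
        rw [h1, Fin.univ_val_map]
      exact List.Perm.eq_of_pairwise' (Multiset.pairwise_sort _ _)
        (List.sortedLE_ofFn_iff.mpr hmono).pairwise hperm
    unfold orderStat
    simp only [hlist]
    simp [List.getElem_ofFn]
  -- Step A : extend the sum over all subsets
  have hsubIcc : Finset.Icc (k.1 + 1) n ⊆ Finset.range (n + 1) := by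
    intro j hj
    rw [Finset.mem_range]
    have := (Finset.mem_Icc.mp hj).2
    omega
  have hvanish : ∀ j ∈ Finset.range (n + 1), j ∉ Finset.Icc (k.1 + 1) n →
      (∑ S ∈ Finset.univ.powerset.filter (fun S : Finset (Fin n) => S.card = j),
        (-1 : ℝ) ^ (j - (k.1 + 1)) * ((j - 1).choose k.1) * finsetMax S v) = 0 := by
    intro j hj hj'
    refine Finset.sum_eq_zero fun S hS => ?_
    rw [Finset.mem_filter] at hS
    rcases Nat.eq_zero_or_pos j with rfl | hj1
    · have : S = ∅ := Finset.card_eq_zero.mp hS.2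
      subst this
      simp [finsetMax]
    · rw [Finset.mem_range] at hj
      rw [Finset.mem_Icc] at hj'
      rw [Nat.choose_eq_zero_of_lt (show j - 1 < k.1 by omega)]
      simp
  have hA : (∑ j ∈ Finset.Icc (k.1 + 1) n,
        ∑ S ∈ Finset.univ.powerset.filter (fun S : Finset (Fin n) => S.card = j),
          (-1 : ℝ) ^ (j - (k.1 + 1)) * ((j - 1).choose k.1) * finsetMax S v)
      = ∑ S ∈ (Finset.univ : Finset (Fin n)).powerset,
          (-1 : ℝ) ^ (S.card - (k.1 + 1)) * ((S.card - 1).choose k.1) * finsetMax S v := by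
    rw [Finset.sum_subset hsubIcc hvanish]
    have hfib : ∀ j ∈ Finset.range (n + 1),
        (∑ S ∈ Finset.univ.powerset.filter (fun S : Finset (Fin n) => S.card = j),
          (-1 : ℝ) ^ (j - (k.1 + 1)) * ((j - 1).choose k.1) * finsetMax S v)
        = ∑ S ∈ Finset.univ.powerset.filter (fun S : Finset (Fin n) => S.card = j),
          (-1 : ℝ) ^ (S.card - (k.1 + 1)) * ((S.card - 1).choose k.1) * finsetMax S v := by
      intro j hj
      refine Finset.sum_congr rfl fun S hS => ?_
      rw [(Finset.mem_filter.mp hS).2]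
    rw [Finset.sum_congr rfl hfib]
    exact Finset.sum_fiberwise_of_maps_to
      (fun S hS => Finset.mem_range.mpr (Nat.lt_succ_of_le
        ((Finset.card_le_card (Finset.mem_powerset.mp hS)).trans (by simp)))) _
  -- Step B : reindex by the sorting permutation
  have hB : (∑ S ∈ (Finset.univ : Finset (Fin n)).powerset,
          (-1 : ℝ) ^ (S.card - (k.1 + 1)) * ((S.card - 1).choose k.1) * finsetMax S v)
      = ∑ T ∈ (Finset.univ : Finset (Fin n)).powerset,
          (-1 : ℝ) ^ (T.card - (k.1 + 1)) * ((T.card - 1).choose k.1)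
            * finsetMax T (v ∘ σ) := by
    refine Finset.sum_nbij' (i := fun S => S.image ⇑σ.symm) (j := fun T => T.image ⇑σ)
      ?_ ?_ ?_ ?_ ?_
    · intro S _
      exact Finset.mem_powerset.mpr (Finset.subset_univ _)
    · intro T _
      exact Finset.mem_powerset.mpr (Finset.subset_univ _)
    · intro S _
      ext a
      simp
    · intro T _
      ext a
      simp
    · intro S _
      rw [finsetMax_image, Finset.card_image_of_injective _ σ.symm.injective]
      have : (v ∘ ⇑σ) ∘ ⇑σ.symm = v := by
        funext i
        simp
      rw [this]
  rw [hC, hA, hB]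
  exact (key_lemma k (v ∘ σ) hmono).symm
end

section
/- Let T be the triangle inequality matrix of the complete graph on m vertices (m ≥ 3), encoding all 3·C(m,3) constraints of form x_{ij} - x_{ik} - x_{kj} ≤ 0 over the C(m,2) edge variables. Then the Gram matrix A = T^t T satisfies a_{ii} = 3(m-2), a_{ij} ∈ {0,-1} for i ≠ j, Σ_{j≠i}|a_{ij}| = 2(m-2), hence A is strictly diagonally dominant and T has full column rank. -/
open Matrix

/-- Index of edges of the complete graph on `m` vertices. -/
abbrev EdgeIdx (m : ℕ) := {e : Fin m × Fin m // e.1 < e.2}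

/-- Index of the triangle inequality constraints `x_{ij} - x_{ik} - x_{kj} ≤ 0`:
an edge `{i,j}` (with `i < j`) together with a third vertex `k ∉ {i,j}`.
There are `C(m,2)·(m-2) = 3·C(m,3)` such constraints. -/
abbrev TriIdx (m : ℕ) := {q : EdgeIdx m × Fin m // q.2 ≠ q.1.1.1 ∧ q.2 ≠ q.1.1.2}

/-- The triangle inequality matrix `T` of the complete graph on `m` vertices: the row of
the constraint `x_{ij} - x_{ik} - x_{kj} ≤ 0` has a `+1` in the column of edge `{i,j}`
and `-1`s in the columns of edges `{i,k}` and `{k,j}`. -/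
def triMatrix (m : ℕ) : Matrix (TriIdx m) (EdgeIdx m) ℝ := fun r e =>
  let i := r.1.1.1.1
  let j := r.1.1.1.2
  let k := r.1.2
  if e.1.1 = i ∧ e.1.2 = j then 1
  else if (e.1.1 = min i k ∧ e.1.2 = max i k) ∨ (e.1.1 = min k j ∧ e.1.2 = max k j) then -1
  else 0

namespace Stmt15Aux
variable {m : ℕ}

/-- sorted edge -/
def sE (a b : Fin m) (h : a ≠ b) : EdgeIdx m := ⟨(min a b, max a b), min_lt_max.2 h⟩

lemma edge_ext {e e' : EdgeIdx m} (h1 : e.1.1 = e'.1.1) (h2 : e.1.2 = e'.1.2) : e = e' :=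
  Subtype.ext (Prod.ext h1 h2)

lemma sE_comm (a b : Fin m) (h : a ≠ b) : sE a b h = sE b a h.symm :=
  edge_ext (min_comm a b) (max_comm a b)

lemma sE_eq_of {a b a' b' : Fin m} (h : a ≠ b) (h' : a' ≠ b') (ha : a = a') (hb : b = b') :
    sE a b h = sE a' b' h' := by subst ha; subst hb; rfl

lemma eq_sE_iff {e : EdgeIdx m} {a b : Fin m} (h : a ≠ b) :
    e = sE a b h ↔ (e.1.1 = a ∧ e.1.2 = b) ∨ (e.1.1 = b ∧ e.1.2 = a) := by
  obtain ⟨⟨x, y⟩, hxy⟩ := e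
  have hxy' : x < y := hxy
  simp only [sE, Subtype.ext_iff, Prod.ext_iff, min_def, max_def]
  dsimp only at *
  split_ifs <;> constructor <;> (intro hh) <;> omega

/-- the two right-hand-side edges of a row -/
def s1 (r : TriIdx m) : EdgeIdx m := sE r.1.1.1.1 r.1.2 r.2.1.symm
def s2 (r : TriIdx m) : EdgeIdx m := sE r.1.2 r.1.1.1.2 r.2.2

lemma f_ne_s1 (r : TriIdx m) : r.1.1 ≠ s1 r := by
  obtain ⟨⟨⟨⟨a, b⟩, hab⟩, k⟩, hk1, hk2⟩ := r
  have hab' : a < b := hab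
  have hk1' : k ≠ a := hk1
  have hk2' : k ≠ b := hk2
  simp only [s1, sE, ne_eq, Subtype.ext_iff, Prod.ext_iff, min_def, max_def]
  dsimp only at *
  split_ifs <;> omega

lemma f_ne_s2 (r : TriIdx m) : r.1.1 ≠ s2 r := by
  obtain ⟨⟨⟨⟨a, b⟩, hab⟩, k⟩, hk1, hk2⟩ := r
  have hab' : a < b := hab
  have hk1' : k ≠ a := hk1
  have hk2' : k ≠ b := hk2
  simp only [s2, sE, ne_eq, Subtype.ext_iff, Prod.ext_iff, min_def, max_def]
  dsimp only at *
  split_ifs <;> omega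

lemma s1_ne_s2 (r : TriIdx m) : s1 r ≠ s2 r := by
  obtain ⟨⟨⟨⟨a, b⟩, hab⟩, k⟩, hk1, hk2⟩ := r
  have hab' : a < b := hab
  have hk1' : k ≠ a := hk1
  have hk2' : k ≠ b := hk2
  simp only [s1, s2, sE, ne_eq, Subtype.ext_iff, Prod.ext_iff, min_def, max_def]
  dsimp only at *
  split_ifs <;> omega

lemma tri_eq (r : TriIdx m) (e : EdgeIdx m) :
    triMatrix m r e = (if e = r.1.1 then (1 : ℝ) else 0) - (if e = s1 r then 1 else 0) -
      (if e = s2 r then 1 else 0) := by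
  have h1 : (e.1.1 = r.1.1.1.1 ∧ e.1.2 = r.1.1.1.2) ↔ e = r.1.1 := by
    rw [Subtype.ext_iff, Prod.ext_iff]
  have h2 : (e.1.1 = min r.1.1.1.1 r.1.2 ∧ e.1.2 = max r.1.1.1.1 r.1.2) ↔ e = s1 r := by
    rw [Subtype.ext_iff, Prod.ext_iff]; rfl
  have h3 : (e.1.1 = min r.1.2 r.1.1.1.2 ∧ e.1.2 = max r.1.2 r.1.1.1.2) ↔ e = s2 r := by
    rw [Subtype.ext_iff, Prod.ext_iff]; rfl
  simp only [triMatrix, h1, h2, h3]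
  have d1 := f_ne_s1 r
  have d2 := f_ne_s2 r
  have d3 := s1_ne_s2 r
  split_ifs <;> simp_all <;> norm_num

lemma tri_lhs (r : TriIdx m) : triMatrix m r r.1.1 = 1 := by
  rw [tri_eq]
  simp [f_ne_s1 r, f_ne_s2 r]

lemma tri_rhs (r : TriIdx m) (e : EdgeIdx m) (h : e = s1 r ∨ e = s2 r) :
    triMatrix m r e = -1 := by
  rw [tri_eq]
  rcases h with rfl | rfl
  · simp [(f_ne_s1 r).symm, s1_ne_s2 r]
  · simp [(f_ne_s2 r).symm, (s1_ne_s2 r).symm]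

lemma tri_zero (r : TriIdx m) (e : EdgeIdx m) (h1 : e ≠ r.1.1) (h2 : e ≠ s1 r)
    (h3 : e ≠ s2 r) : triMatrix m r e = 0 := by
  rw [tri_eq]; simp [h1, h2, h3]

lemma verts_sub (r : TriIdx m) (e : EdgeIdx m) (h : triMatrix m r e ≠ 0) :
    (e.1.1 = r.1.1.1.1 ∨ e.1.1 = r.1.1.1.2 ∨ e.1.1 = r.1.2) ∧
      (e.1.2 = r.1.1.1.1 ∨ e.1.2 = r.1.1.1.2 ∨ e.1.2 = r.1.2) := by
  have he : e = r.1.1 ∨ e = s1 r ∨ e = s2 r := by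
    by_contra hc
    push_neg at hc
    exact h (tri_zero r e hc.1 hc.2.1 hc.2.2)
  rcases he with rfl | he | he
  · exact ⟨Or.inl rfl, Or.inr (Or.inl rfl)⟩
  · rcases (eq_sE_iff _).mp he with ⟨ha, hb⟩ | ⟨ha, hb⟩ <;> tauto
  · rcases (eq_sE_iff _).mp he with ⟨ha, hb⟩ | ⟨ha, hb⟩ <;> tauto

lemma card_compl_pair {a b : Fin m} (h : a ≠ b) :
    (Finset.univ \ {a, b} : Finset (Fin m)).card = m - 2 := by
  rw [Finset.card_sdiff_of_subset (Finset.subset_univ _)]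
  simp [Finset.card_insert_of_notMem, h]

lemma card_lhs (e : EdgeIdx m) :
    (Finset.univ.filter (fun r : TriIdx m => e = r.1.1)).card = m - 2 := by
  rw [← card_compl_pair (ne_of_lt e.2)]
  apply Finset.card_bij (fun r _ => r.1.2)
  · rintro ⟨⟨f, k⟩, hk1, hk2⟩ hr
    simp only [Finset.mem_filter] at hr
    obtain ⟨-, rfl⟩ := hr
    simp only [Finset.mem_sdiff, Finset.mem_univ, Finset.mem_insert, Finset.mem_singleton,
      true_and]
    dsimp only at *
    tauto
  · rintro ⟨⟨f, k⟩, hk1, hk2⟩ hr ⟨⟨f', k'⟩, hk1', hk2'⟩ hr' hkk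
    simp only [Finset.mem_filter] at hr hr'
    obtain ⟨-, rfl⟩ := hr
    obtain ⟨-, rfl⟩ := hr'
    dsimp only at hkk
    subst hkk
    rfl
  · intro k hk
    simp only [Finset.mem_sdiff, Finset.mem_univ, Finset.mem_insert, Finset.mem_singleton,
      true_and] at hk
    push_neg at hk
    exact ⟨⟨⟨e, k⟩, hk.1, hk.2⟩, by simp, rfl⟩

lemma card_aux {x y : Fin m} (hxy : x ≠ y) :
    (Finset.univ.filter
      (fun r : TriIdx m => r.1.2 = x ∧ (r.1.1.1.1 = y ∨ r.1.1.1.2 = y))).card = m - 2 := by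
  rw [← card_compl_pair hxy]
  apply Finset.card_bij (fun r _ => if r.1.1.1.1 = y then r.1.1.1.2 else r.1.1.1.1)
  · rintro ⟨⟨⟨⟨a, b⟩, hab⟩, k⟩, hk1, hk2⟩ hr
    have hab' : a < b := hab
    have hk1' : k ≠ a := hk1
    have hk2' : k ≠ b := hk2
    simp only [Finset.mem_filter, Finset.mem_univ, true_and] at hr
    simp only [Finset.mem_sdiff, Finset.mem_univ, Finset.mem_insert, Finset.mem_singleton,
      true_and]
    dsimp only at *
    split_ifs <;> omega
  · rintro ⟨⟨⟨⟨a, b⟩, hab⟩, k⟩, hk1, hk2⟩ hr ⟨⟨⟨⟨a', b'⟩, hab'⟩, k'⟩, hk1', hk2'⟩ hr' hw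
    have h1 : a < b := hab
    have h2 : k ≠ a := hk1
    have h3 : k ≠ b := hk2
    have h4 : a' < b' := hab'
    have h5 : k' ≠ a' := hk1'
    have h6 : k' ≠ b' := hk2'
    simp only [Finset.mem_filter, Finset.mem_univ, true_and] at hr hr'
    simp only [Subtype.ext_iff, Prod.ext_iff]
    dsimp only at *
    split_ifs at hw <;> omega
  · intro w hw
    simp only [Finset.mem_sdiff, Finset.mem_univ, Finset.mem_insert, Finset.mem_singleton,
      true_and] at hw
    push_neg at hw
    have hyw : y ≠ w := fun h => hw.2 h.symm
    refine ⟨⟨⟨sE y w hyw, x⟩, ?_, ?_⟩, ?_, ?_⟩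
    · show x ≠ min y w
      rcases min_cases y w with ⟨h1, -⟩ | ⟨h1, -⟩ <;> rw [h1]
      · exact hxy
      · exact fun h => hw.1 h.symm
    · show x ≠ max y w
      rcases max_cases y w with ⟨h1, -⟩ | ⟨h1, -⟩ <;> rw [h1]
      · exact hxy
      · exact fun h => hw.1 h.symm
    · simp only [Finset.mem_filter, Finset.mem_univ, true_and]
      show min y w = y ∨ max y w = y
      rcases le_total y w with h | h
      · exact Or.inl (min_eq_left h)
      · exact Or.inr (max_eq_left h)
    · show (if min y w = y then max y w else min y w) = w
      rcases le_total y w with h | h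
      · rw [if_pos (min_eq_left h), max_eq_right h]
      · rw [min_eq_right h, max_eq_left h]
        rw [if_neg (fun hh : w = y => hyw hh.symm)]

lemma rhs_iff (e : EdgeIdx m) (r : TriIdx m) :
    (e = s1 r ∨ e = s2 r) ↔
      ((r.1.2 = e.1.1 ∧ (r.1.1.1.1 = e.1.2 ∨ r.1.1.1.2 = e.1.2)) ∨
        (r.1.2 = e.1.2 ∧ (r.1.1.1.1 = e.1.1 ∨ r.1.1.1.2 = e.1.1))) := by
  obtain ⟨⟨⟨⟨a, b⟩, hab⟩, k⟩, hk1, hk2⟩ := r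
  obtain ⟨⟨x, y⟩, hxy⟩ := e
  have hab' : a < b := hab
  have hxy' : x < y := hxy
  have hk1' : k ≠ a := hk1
  have hk2' : k ≠ b := hk2
  simp only [s1, s2, eq_sE_iff]
  dsimp only at *
  omega

lemma card_rhs (e : EdgeIdx m) :
    (Finset.univ.filter (fun r : TriIdx m => e = s1 r ∨ e = s2 r)).card = 2 * (m - 2) := by
  have hij : e.1.1 ≠ e.1.2 := ne_of_lt e.2
  rw [Finset.filter_congr (fun r _ => by rw [rhs_iff e r]), Finset.filter_or]
  rw [Finset.card_union_of_disjoint, card_aux hij.symm, card_aux hij]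
  · ring
  · rw [Finset.disjoint_filter]
    rintro r - ⟨h1, -⟩ ⟨h2, -⟩
    exact hij (h1 ▸ h2)

lemma sq_eq (r : TriIdx m) (e : EdgeIdx m) :
    triMatrix m r e * triMatrix m r e =
      (if e = r.1.1 then (1 : ℝ) else 0) + (if e = s1 r ∨ e = s2 r then 1 else 0) := by
  by_cases h1 : e = r.1.1
  · subst h1
    rw [tri_lhs]
    simp [(f_ne_s1 r), (f_ne_s2 r)]
  · by_cases h2 : e = s1 r ∨ e = s2 r
    · rw [tri_rhs r e h2]
      simp [h1, h2]
    · push_neg at h2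
      rw [tri_zero r e h1 h2.1 h2.2]
      simp [h1, h2.1, h2.2]

lemma col_eq (r : TriIdx m) (e : EdgeIdx m) :
    triMatrix m r e =
      (if e = r.1.1 then (1 : ℝ) else 0) - (if e = s1 r ∨ e = s2 r then 1 else 0) := by
  rw [tri_eq]
  by_cases h2 : e = s1 r
  · have h3 : e ≠ s2 r := fun h => s1_ne_s2 r (h2 ▸ h)
    simp [h2, h3, s1_ne_s2 r]
  · by_cases h3 : e = s2 r <;> simp [h2, h3, (s1_ne_s2 r).symm]

lemma diag_sum (e : EdgeIdx m) :
    ∑ r : TriIdx m, triMatrix m r e * triMatrix m r e = ((m - 2 : ℕ) : ℝ) + 2 * (m - 2 : ℕ) := by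
  simp only [sq_eq]
  rw [Finset.sum_add_distrib, Finset.sum_boole, Finset.sum_boole]
  have h1 : (Finset.univ.filter (fun r : TriIdx m => e = r.1.1)).card = m - 2 := card_lhs e
  have h2 := card_rhs e
  simp only [eq_comm (a := e)] at h1 h2 ⊢
  rw [h1, h2]
  push_cast
  ring

lemma col_sum (e : EdgeIdx m) :
    ∑ r : TriIdx m, triMatrix m r e = ((m - 2 : ℕ) : ℝ) - 2 * (m - 2 : ℕ) := by
  simp only [col_eq]
  rw [Finset.sum_sub_distrib, Finset.sum_boole, Finset.sum_boole]
  have h1 : (Finset.univ.filter (fun r : TriIdx m => e = r.1.1)).card = m - 2 := card_lhs e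
  have h2 := card_rhs e
  simp only [eq_comm (a := e)] at h1 h2 ⊢
  rw [h1, h2]
  push_cast
  ring

lemma row_sum (r : TriIdx m) : ∑ e : EdgeIdx m, triMatrix m r e = -1 := by
  simp only [tri_eq]
  rw [Finset.sum_sub_distrib, Finset.sum_sub_distrib]
  simp [Finset.sum_ite_eq' Finset.univ]

lemma ne_min {x a b : Fin m} (h1 : x ≠ a) (h2 : x ≠ b) : x ≠ min a b := by
  rcases min_cases a b with ⟨h, -⟩ | ⟨h, -⟩ <;> rw [h] <;> assumption

lemma ne_max {x a b : Fin m} (h1 : x ≠ a) (h2 : x ≠ b) : x ≠ max a b := by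
  rcases max_cases a b with ⟨h, -⟩ | ⟨h, -⟩ <;> rw [h] <;> assumption

section rows
variable (v w w' : Fin m) (hvw : v ≠ w) (hvw' : v ≠ w') (hww' : w ≠ w')

def row1 : TriIdx m := ⟨(sE v w hvw, w'), ne_min hvw'.symm hww'.symm, ne_max hvw'.symm hww'.symm⟩
def row2 : TriIdx m := ⟨(sE v w' hvw', w), ne_min hvw.symm hww', ne_max hvw.symm hww'⟩
def row3 : TriIdx m := ⟨(sE w w' hww', v), ne_min hvw hvw', ne_max hvw hvw'⟩

lemma hs1 : sE v w' hvw' = s1 (row1 v w w' hvw hvw' hww') ∨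
    sE v w' hvw' = s2 (row1 v w w' hvw hvw' hww') := by
  simp only [row1, s1, s2, Subtype.ext_iff, Prod.ext_iff, sE]
  simp only [min_def, max_def]
  split_ifs <;> omega

lemma hs2 : sE v w hvw = s1 (row2 v w w' hvw hvw' hww') ∨
    sE v w hvw = s2 (row2 v w w' hvw hvw' hww') := by
  simp only [row2, s1, s2, Subtype.ext_iff, Prod.ext_iff, sE]
  simp only [min_def, max_def]
  split_ifs <;> omega

lemma hs3 : sE v w hvw = s1 (row3 v w w' hvw hvw' hww') ∨
    sE v w hvw = s2 (row3 v w w' hvw hvw' hww') := by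
  simp only [row3, s1, s2, Subtype.ext_iff, Prod.ext_iff, sE]
  simp only [min_def, max_def]
  split_ifs <;> omega

lemma hs3' : sE v w' hvw' = s1 (row3 v w w' hvw hvw' hww') ∨
    sE v w' hvw' = s2 (row3 v w w' hvw hvw' hww') := by
  simp only [row3, s1, s2, Subtype.ext_iff, Prod.ext_iff, sE]
  simp only [min_def, max_def]
  split_ifs <;> omega

set_option maxHeartbeats 1000000 in
lemma key_mem (r : TriIdx m)
    (h0 : triMatrix m r (sE v w hvw) * triMatrix m r (sE v w' hvw') ≠ 0) :
    r ∈ ({row1 v w w' hvw hvw' hww', row2 v w w' hvw hvw' hww',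
      row3 v w w' hvw hvw' hww'} : Finset (TriIdx m)) := by
  obtain ⟨hA, hB⟩ := mul_ne_zero_iff.mp h0
  have h1 := verts_sub r _ hA
  have h2 := verts_sub r _ hB
  clear hA hB h0
  obtain ⟨⟨⟨⟨a, b⟩, hab⟩, k⟩, hk1, hk2⟩ := r
  have hab' : a < b := hab
  have hk1' : k ≠ a := hk1
  have hk2' : k ≠ b := hk2
  simp only [sE] at h1 h2
  have hv : v = a ∨ v = b ∨ v = k := by
    rcases le_total v w with h | h
    · simpa [min_eq_left h] using h1.1
    · simpa [max_eq_left h] using h1.2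
  have hw : w = a ∨ w = b ∨ w = k := by
    rcases le_total v w with h | h
    · simpa [max_eq_right h] using h1.2
    · simpa [min_eq_right h] using h1.1
  have hw' : w' = a ∨ w' = b ∨ w' = k := by
    rcases le_total v w' with h | h
    · simpa [max_eq_right h] using h2.2
    · simpa [min_eq_right h] using h2.1
  clear h1 h2
  simp only [Finset.mem_insert, Finset.mem_singleton, Subtype.ext_iff, Prod.ext_iff,
    row1, row2, row3, sE, min_def, max_def]
  rcases hv with rfl | rfl | rfl <;> rcases hw with rfl | rfl | rfl <;>
    rcases hw' with rfl | rfl | rfl <;> split_ifs <;> omega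

end rows

lemma sum_adj (v w w' : Fin m) (hvw : v ≠ w) (hvw' : v ≠ w') (hww' : w ≠ w') :
    ∑ r : TriIdx m, triMatrix m r (sE v w hvw) * triMatrix m r (sE v w' hvw') = -1 := by
  have hr12 : row1 v w w' hvw hvw' hww' ≠ row2 v w w' hvw hvw' hww' :=
    fun hh => hww' (congrArg (fun r : TriIdx m => r.1.2) hh).symm
  have hr13 : row1 v w w' hvw hvw' hww' ≠ row3 v w w' hvw hvw' hww' :=
    fun hh => hvw' (congrArg (fun r : TriIdx m => r.1.2) hh).symm
  have hr23 : row2 v w w' hvw hvw' hww' ≠ row3 v w w' hvw hvw' hww' :=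
    fun hh => hvw (congrArg (fun r : TriIdx m => r.1.2) hh).symm
  rw [← Finset.sum_subset
    (Finset.subset_univ ({row1 v w w' hvw hvw' hww', row2 v w w' hvw hvw' hww',
      row3 v w w' hvw hvw' hww'} : Finset (TriIdx m)))
    (fun r _ hr => by
      by_contra h0
      exact hr (key_mem v w w' hvw hvw' hww' r h0))]
  rw [Finset.sum_insert (by simp [hr12, hr13]), Finset.sum_insert (by simp [hr23]),
    Finset.sum_singleton]
  have v1 : triMatrix m (row1 v w w' hvw hvw' hww') (sE v w hvw) = 1 :=
    tri_lhs (row1 v w w' hvw hvw' hww')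
  have v2 : triMatrix m (row2 v w w' hvw hvw' hww') (sE v w' hvw') = 1 :=
    tri_lhs (row2 v w w' hvw hvw' hww')
  rw [v1, v2, tri_rhs _ _ (hs1 v w w' hvw hvw' hww'), tri_rhs _ _ (hs2 v w w' hvw hvw' hww'),
    tri_rhs _ _ (hs3 v w w' hvw hvw' hww'), tri_rhs _ _ (hs3' v w w' hvw hvw' hww')]
  norm_num

lemma offdiag (e e' : EdgeIdx m) (h : e ≠ e') :
    (∑ r : TriIdx m, triMatrix m r e * triMatrix m r e') = 0 ∨
      (∑ r : TriIdx m, triMatrix m r e * triMatrix m r e') = -1 := by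
  have h1 : e.1.1 < e.1.2 := e.2
  have h2 : e'.1.1 < e'.1.2 := e'.2
  by_cases hs : e.1.1 = e'.1.1 ∨ e.1.1 = e'.1.2 ∨ e.1.2 = e'.1.1 ∨ e.1.2 = e'.1.2
  · right
    have hne : ¬(e.1.1 = e'.1.1 ∧ e.1.2 = e'.1.2) := fun hh => h (edge_ext hh.1 hh.2)
    rcases hs with h0 | h0 | h0 | h0
    · have hvw : e.1.1 ≠ e.1.2 := ne_of_lt h1
      have hvw' : e.1.1 ≠ e'.1.2 := by omega
      have hww' : e.1.2 ≠ e'.1.2 := by omega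
      have he : e = sE e.1.1 e.1.2 hvw := (eq_sE_iff hvw).mpr (Or.inl ⟨rfl, rfl⟩)
      have he' : e' = sE e.1.1 e'.1.2 hvw' := (eq_sE_iff hvw').mpr (Or.inl ⟨h0.symm, rfl⟩)
      rw [he, he']
      exact sum_adj _ _ _ hvw hvw' hww'
    · have hvw : e.1.1 ≠ e.1.2 := ne_of_lt h1
      have hvw' : e.1.1 ≠ e'.1.1 := by omega
      have hww' : e.1.2 ≠ e'.1.1 := by omega
      have he : e = sE e.1.1 e.1.2 hvw := (eq_sE_iff hvw).mpr (Or.inl ⟨rfl, rfl⟩)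
      have he' : e' = sE e.1.1 e'.1.1 hvw' := (eq_sE_iff hvw').mpr (Or.inr ⟨rfl, h0.symm⟩)
      rw [he, he']
      exact sum_adj _ _ _ hvw hvw' hww'
    · have hvw : e.1.2 ≠ e.1.1 := (ne_of_lt h1).symm
      have hvw' : e.1.2 ≠ e'.1.2 := by omega
      have hww' : e.1.1 ≠ e'.1.2 := by omega
      have he : e = sE e.1.2 e.1.1 hvw := (eq_sE_iff hvw).mpr (Or.inr ⟨rfl, rfl⟩)
      have he' : e' = sE e.1.2 e'.1.2 hvw' := (eq_sE_iff hvw').mpr (Or.inl ⟨h0.symm, rfl⟩)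
      rw [he, he']
      exact sum_adj _ _ _ hvw hvw' hww'
    · have hvw : e.1.2 ≠ e.1.1 := (ne_of_lt h1).symm
      have hvw' : e.1.2 ≠ e'.1.1 := by omega
      have hww' : e.1.1 ≠ e'.1.1 := by omega
      have he : e = sE e.1.2 e.1.1 hvw := (eq_sE_iff hvw).mpr (Or.inr ⟨rfl, rfl⟩)
      have he' : e' = sE e.1.2 e'.1.1 hvw' := (eq_sE_iff hvw').mpr (Or.inr ⟨rfl, h0.symm⟩)
      rw [he, he']
      exact sum_adj _ _ _ hvw hvw' hww'
  · left
    push_neg at hs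
    apply Finset.sum_eq_zero
    intro r _
    by_contra h0
    obtain ⟨hA, hB⟩ := mul_ne_zero_iff.mp h0
    have hm1 := verts_sub r e hA
    have hm2 := verts_sub r e' hB
    have hab : r.1.1.1.1 < r.1.1.1.2 := r.1.1.2
    have hk1 := r.2.1
    have hk2 := r.2.2
    omega

end Stmt15Aux

/-- `A = TᵀT` satisfies `a_{ii} = 3(m-2)`, `a_{ij} ∈ {0,-1}` for `i ≠ j`,
and `Σ_{j≠i}|a_{ij}| = 2(m-2)`; hence `A` is strictly diagonally dominant and `T` has
full column rank. -/
theorem stmt15 (m : ℕ) (hm : 3 ≤ m) :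
    (∀ e : EdgeIdx m, ((triMatrix m)ᵀ * triMatrix m) e e = 3 * ((m : ℝ) - 2)) ∧
      (∀ e e' : EdgeIdx m, e ≠ e' →
        ((triMatrix m)ᵀ * triMatrix m) e e' = 0 ∨
          ((triMatrix m)ᵀ * triMatrix m) e e' = -1) ∧
      (∀ e : EdgeIdx m,
        ∑ e' ∈ Finset.univ.erase e, |((triMatrix m)ᵀ * triMatrix m) e e'| =
          2 * ((m : ℝ) - 2)) ∧
      (∀ e : EdgeIdx m,
        ∑ e' ∈ Finset.univ.erase e, |((triMatrix m)ᵀ * triMatrix m) e e'| <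
          |((triMatrix m)ᵀ * triMatrix m) e e|) ∧
      (triMatrix m).rank = Fintype.card (EdgeIdx m) := by
  have entry : ∀ e e' : EdgeIdx m, ((triMatrix m)ᵀ * triMatrix m) e e' =
      ∑ r : TriIdx m, triMatrix m r e * triMatrix m r e' := by
    intro e e'
    simp [Matrix.mul_apply, Matrix.transpose_apply]
  have hm2 : (2 : ℕ) ≤ m := by omega
  have hcast : ((m - 2 : ℕ) : ℝ) = (m : ℝ) - 2 := by
    rw [Nat.cast_sub hm2]; norm_num
  have hmr : (3 : ℝ) ≤ (m : ℝ) := by exact_mod_cast hm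
  have hdiag : ∀ e : EdgeIdx m, ((triMatrix m)ᵀ * triMatrix m) e e = 3 * ((m : ℝ) - 2) := by
    intro e
    rw [entry, Stmt15Aux.diag_sum, hcast]; ring
  have hoff : ∀ e e' : EdgeIdx m, e ≠ e' →
      ((triMatrix m)ᵀ * triMatrix m) e e' = 0 ∨ ((triMatrix m)ᵀ * triMatrix m) e e' = -1 := by
    intro e e' hne
    rw [entry e e']
    exact Stmt15Aux.offdiag e e' hne
  have hrowsum : ∀ e : EdgeIdx m,
      ∑ e' : EdgeIdx m, ((triMatrix m)ᵀ * triMatrix m) e e' = (m : ℝ) - 2 := by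
    intro e
    calc ∑ e' : EdgeIdx m, ((triMatrix m)ᵀ * triMatrix m) e e'
        = ∑ e' : EdgeIdx m, ∑ r : TriIdx m, triMatrix m r e * triMatrix m r e' := by
          simp_rw [entry]
      _ = ∑ r : TriIdx m, ∑ e' : EdgeIdx m, triMatrix m r e * triMatrix m r e' :=
          Finset.sum_comm
      _ = ∑ r : TriIdx m, triMatrix m r e * ∑ e' : EdgeIdx m, triMatrix m r e' := by
          simp_rw [Finset.mul_sum]
      _ = -∑ r : TriIdx m, triMatrix m r e := by
          simp_rw [Stmt15Aux.row_sum]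
          simp
      _ = (m : ℝ) - 2 := by
          rw [Stmt15Aux.col_sum, hcast]; ring
  have herase : ∀ e : EdgeIdx m,
      ∑ e' ∈ Finset.univ.erase e, |((triMatrix m)ᵀ * triMatrix m) e e'| = 2 * ((m : ℝ) - 2) := by
    intro e
    have h1 : ∀ e' ∈ Finset.univ.erase e,
        |((triMatrix m)ᵀ * triMatrix m) e e'| = -((triMatrix m)ᵀ * triMatrix m) e e' := by
      intro e' he'
      have hne : e ≠ e' := (Finset.ne_of_mem_erase he').symm
      rcases hoff e e' hne with h | h <;> rw [h] <;> norm_num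
    rw [Finset.sum_congr rfl h1, Finset.sum_neg_distrib,
      Finset.sum_erase_eq_sub (Finset.mem_univ e), hrowsum, hdiag]
    ring
  have hlt : ∀ e : EdgeIdx m,
      ∑ e' ∈ Finset.univ.erase e, |((triMatrix m)ᵀ * triMatrix m) e e'| <
        |((triMatrix m)ᵀ * triMatrix m) e e| := by
    intro e
    rw [herase, hdiag, abs_of_nonneg (by linarith)]
    linarith
  refine ⟨hdiag, hoff, herase, hlt, ?_⟩
  have hdet : ((triMatrix m)ᵀ * triMatrix m).det ≠ 0 :=
    det_ne_zero_of_sum_row_lt_diag (fun k => by simpa [Real.norm_eq_abs] using hlt k)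
  have hunit : IsUnit ((triMatrix m)ᵀ * triMatrix m) :=
    (Matrix.isUnit_iff_isUnit_det _).mpr (isUnit_iff_ne_zero.mpr hdet)
  have h1 : ((triMatrix m)ᵀ * triMatrix m).rank = Fintype.card (EdgeIdx m) :=
    Matrix.rank_of_isUnit _ hunit
  rw [← Matrix.rank_transpose_mul_self]
  exact h1
end

section
/- With M the incidence matrix of the complete graph on m vertices and T^t T = (3m-4)I - MM^t, for any ρ > 0 the matrix I + ρ(T^t T + I) is invertible with inverse a·I + abρ·MM^t + 4abcρ²·11^t, where a = [3(m-1)ρ + 1]^{-1}, b = [(2m-1)ρ + 1]^{-1}, c = [(m-1)ρ + 1]^{-1}. -/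
open Matrix Finset

/-- The edge–vertex incidence matrix of the complete graph on `m` vertices. -/
def incidence (m : ℕ) : Matrix (EdgeIdx m) (Fin m) ℝ :=
  fun e v => if v = e.1.1 ∨ v = e.1.2 then 1 else 0
lemma edge_sum (m : ℕ) (f : Fin m × Fin m → ℝ) :
    ∑ e : EdgeIdx m, f e.1 =
      ∑ p ∈ Finset.univ.filter (fun p : Fin m × Fin m => p.1 < p.2), f p :=
  (Finset.sum_subtype _ (fun p => by simp) f).symm

lemma row_sum (m : ℕ) (e : EdgeIdx m) : ∑ v, incidence m e v = 2 := by
  have hne : e.1.1 ≠ e.1.2 := ne_of_lt e.2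
  have : ∀ v : Fin m, incidence m e v =
      (if v = e.1.1 then (1:ℝ) else 0) + (if v = e.1.2 then (1:ℝ) else 0) := by
    intro v
    by_cases h1 : v = e.1.1 <;> by_cases h2 : v = e.1.2 <;> simp_all [incidence]
  simp only [this, Finset.sum_add_distrib, Finset.sum_ite_eq', Finset.mem_univ, if_true]
  norm_num

lemma col_sum (m : ℕ) (v : Fin m) : ∑ e : EdgeIdx m, incidence m e v = (m:ℝ) - 1 := by
  have h0 := edge_sum m (fun p : Fin m × Fin m => if v = p.1 ∨ v = p.2 then (1:ℝ) else 0)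
  rw [show (∑ e : EdgeIdx m, incidence m e v) =
      ∑ e : EdgeIdx m, (if v = (e:Fin m × Fin m).1 ∨ v = (e:Fin m × Fin m).2 then (1:ℝ) else 0)
      from rfl, h0]
  rw [Finset.sum_filter, Fintype.sum_prod_type]
  have key : ∀ u : Fin m, (∑ w : Fin m, if u < w then (if v = u ∨ v = w then (1:ℝ) else 0) else 0)
      = (if v = u then ((m:ℝ) - 1 - u) else (if u < v then 1 else 0)) := by
    intro u
    by_cases hvu : v = u
    · subst hvu
      have h1 : ∀ w : Fin m, (if v < w then (if v = v ∨ v = w then (1:ℝ) else 0) else 0)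
          = if v < w then (1:ℝ) else 0 := by
        intro w; by_cases h : v < w <;> simp [h]
      rw [Finset.sum_congr rfl fun w _ => h1 w, Finset.sum_boole]
      simp only [if_pos rfl]
      rw [Finset.filter_lt_eq_Ioi, Fin.card_Ioi, Nat.sub_sub,
        Nat.cast_sub (by have := v.2; omega)]
      push_cast; ring
    · have h1 : ∀ w : Fin m, (if u < w then (if v = u ∨ v = w then (1:ℝ) else 0) else 0)
          = if w = v ∧ u < v then (1:ℝ) else 0 := by
        intro w
        by_cases h : u < w <;> by_cases h2 : w = v <;> simp_all <;> omega
      rw [Finset.sum_congr rfl fun w _ => h1 w]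
      by_cases huv : u < v
      · simp [huv, hvu]
      · simp [huv, hvu]
  rw [Finset.sum_congr rfl fun u _ => key u]
  have key2 : ∀ u : Fin m, (if v = u then ((m:ℝ) - 1 - u) else (if u < v then 1 else 0))
      = (if v = u then ((m:ℝ) - 1 - u) else 0) + (if u < v then (1:ℝ) else 0) := by
    intro u
    by_cases h : v = u
    · subst h; simp
    · simp [h]
  rw [Finset.sum_congr rfl fun u _ => key2 u, Finset.sum_add_distrib,
    Finset.sum_ite_eq Finset.univ v, if_pos (Finset.mem_univ v), Finset.sum_boole,
    Finset.filter_gt_eq_Iio, Fin.card_Iio]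
  ring

lemma pair_sum (m : ℕ) {v w : Fin m} (hvw : v < w) :
    ∑ e : EdgeIdx m, incidence m e v * incidence m e w = 1 := by
  have key : ∀ e : EdgeIdx m, incidence m e v * incidence m e w
      = if e = (⟨(v,w), hvw⟩ : EdgeIdx m) then (1:ℝ) else 0 := by
    intro e
    by_cases h : e = (⟨(v,w), hvw⟩ : EdgeIdx m)
    · rw [h, if_pos rfl]; simp [incidence]
    · rw [if_neg h]
      by_cases hv : v = e.1.1 ∨ v = e.1.2
      · by_cases hw : w = e.1.1 ∨ w = e.1.2
        · exfalso
          have he := e.2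
          rcases hv with hv | hv <;> rcases hw with hw | hw
          · exact (ne_of_lt hvw) (hv.trans hw.symm)
          · exact h (Subtype.ext (Prod.ext_iff.mpr ⟨hv.symm, hw.symm⟩))
          · rw [← hw, ← hv] at he; exact absurd hvw (asymm he)
          · exact (ne_of_lt hvw) (hv.trans hw.symm)
        · simp [incidence, hw]
      · simp [incidence, hv]
  rw [Finset.sum_congr rfl fun e _ => key e, Finset.sum_ite_eq' Finset.univ,
    if_pos (Finset.mem_univ _)]

lemma diag_sum (m : ℕ) (v : Fin m) :
    ∑ e : EdgeIdx m, incidence m e v * incidence m e v = (m:ℝ) - 1 := by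
  rw [← col_sum m v]
  refine Finset.sum_congr rfl fun e _ => ?_
  by_cases h : v = e.1.1 ∨ v = e.1.2 <;> simp [incidence, h]

lemma MtM (m : ℕ) : (incidence m)ᵀ * incidence m =
    ((m:ℝ) - 2) • (1 : Matrix (Fin m) (Fin m) ℝ) + Matrix.of (fun _ _ => (1:ℝ)) := by
  ext v w
  rw [Matrix.mul_apply]
  simp only [Matrix.transpose_apply, Matrix.add_apply, Matrix.smul_apply, Matrix.of_apply,
    Matrix.one_apply, smul_eq_mul]
  rcases lt_trichotomy v w with h | h | h
  · rw [pair_sum m h, if_neg (ne_of_lt h)]; ring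
  · subst h
    rw [diag_sum m v, if_pos rfl]; ring
  · have : ∑ e : EdgeIdx m, incidence m e v * incidence m e w
        = ∑ e : EdgeIdx m, incidence m e w * incidence m e v := by
      exact Finset.sum_congr rfl fun e _ => mul_comm _ _
    rw [this, pair_sum m h, if_neg (ne_of_gt h)]; ring

lemma MJM (m : ℕ) : incidence m * Matrix.of (fun (_ _ : Fin m) => (1:ℝ)) * (incidence m)ᵀ =
    (4:ℝ) • Matrix.of (fun (_ _ : EdgeIdx m) => (1:ℝ)) := by
  ext e f
  rw [Matrix.mul_apply]
  have h1 : ∀ w, (incidence m * Matrix.of (fun (_ _ : Fin m) => (1:ℝ))) e w = 2 := by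
    intro w
    rw [Matrix.mul_apply]
    simp only [Matrix.of_apply, mul_one]
    exact row_sum m e
  simp only [h1, Matrix.transpose_apply, Matrix.smul_apply, Matrix.of_apply, smul_eq_mul]
  rw [← Finset.mul_sum, row_sum m f]
  norm_num

lemma hN2 (m : ℕ) : (incidence m * (incidence m)ᵀ) * (incidence m * (incidence m)ᵀ) =
    ((m:ℝ) - 2) • (incidence m * (incidence m)ᵀ) +
      (4:ℝ) • Matrix.of (fun (_ _ : EdgeIdx m) => (1:ℝ)) := by
  have : (incidence m * (incidence m)ᵀ) * (incidence m * (incidence m)ᵀ)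
      = incidence m * ((incidence m)ᵀ * incidence m) * (incidence m)ᵀ := by
    simp only [Matrix.mul_assoc]
  rw [this, MtM, Matrix.mul_add, Matrix.mul_smul, Matrix.mul_one, Matrix.add_mul,
    Matrix.smul_mul, MJM]

lemma hNJ (m : ℕ) : (incidence m * (incidence m)ᵀ) * Matrix.of (fun _ _ => (1:ℝ)) =
    (2 * ((m:ℝ) - 1)) • Matrix.of (fun (_ _ : EdgeIdx m) => (1:ℝ)) := by
  ext e f
  rw [Matrix.mul_apply]
  simp only [Matrix.of_apply, mul_one, Matrix.smul_apply, smul_eq_mul]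
  have h1 : ∀ g : EdgeIdx m, (incidence m * (incidence m)ᵀ) e g
      = ∑ v, incidence m e v * incidence m g v := by
    intro g; rw [Matrix.mul_apply]; simp [Matrix.transpose_apply]
  rw [Finset.sum_congr rfl fun g _ => h1 g, Finset.sum_comm]
  have h2 : ∀ v : Fin m, (∑ g : EdgeIdx m, incidence m e v * incidence m g v)
      = incidence m e v * ((m:ℝ) - 1) := by
    intro v; rw [← Finset.mul_sum, col_sum]
  rw [Finset.sum_congr rfl fun v _ => h2 v, ← Finset.sum_mul, row_sum]

lemma hJN (m : ℕ) : Matrix.of (fun (_ _ : EdgeIdx m) => (1:ℝ)) * (incidence m * (incidence m)ᵀ) =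
    (2 * ((m:ℝ) - 1)) • Matrix.of (fun (_ _ : EdgeIdx m) => (1:ℝ)) := by
  have hNs : (incidence m * (incidence m)ᵀ)ᵀ = incidence m * (incidence m)ᵀ := by
    rw [Matrix.transpose_mul, Matrix.transpose_transpose]
  have hJs : (Matrix.of (fun (_ _ : EdgeIdx m) => (1:ℝ)))ᵀ
      = Matrix.of (fun (_ _ : EdgeIdx m) => (1:ℝ)) := rfl
  calc Matrix.of (fun (_ _ : EdgeIdx m) => (1:ℝ)) * (incidence m * (incidence m)ᵀ)
      = ((incidence m * (incidence m)ᵀ) * Matrix.of (fun (_ _ : EdgeIdx m) => (1:ℝ)))ᵀ := by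
        rw [Matrix.transpose_mul, hNs, hJs]
    _ = (2 * ((m:ℝ) - 1)) • Matrix.of (fun (_ _ : EdgeIdx m) => (1:ℝ)) := by
        rw [hNJ, Matrix.transpose_smul, hJs]

lemma inv_aux {E : Type*} [Fintype E] [DecidableEq E]
    (N J : Matrix E E ℝ) (μ : ℝ) (hμ : 3 ≤ μ)
    (h2 : N * N = (μ - 2) • N + (4:ℝ) • J)
    (hnj : N * J = (2*(μ-1)) • J) (hjn : J * N = (2*(μ-1)) • J)
    (ρ a b c : ℝ) (hρ : 0 < ρ)
    (ha : a = (3*(μ-1)*ρ+1)⁻¹) (hb : b = ((2*μ-1)*ρ+1)⁻¹) (hc : c = ((μ-1)*ρ+1)⁻¹) :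
    ((3*(μ-1)*ρ+1) • (1:Matrix E E ℝ) - ρ • N) *
      (a • (1:Matrix E E ℝ) + (a*b*ρ) • N + (4*a*b*c*ρ^2) • J) = 1 ∧
    (a • (1:Matrix E E ℝ) + (a*b*ρ) • N + (4*a*b*c*ρ^2) • J) *
      ((3*(μ-1)*ρ+1) • (1:Matrix E E ℝ) - ρ • N) = 1 := by
  have hd1 : (0:ℝ) < 3*(μ-1)*ρ+1 := by nlinarith
  have hd2 : (0:ℝ) < (2*μ-1)*ρ+1 := by nlinarith
  have hd3 : (0:ℝ) < (μ-1)*ρ+1 := by nlinarith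
  have hn1 : (3*(μ-1)*ρ+1) ≠ 0 := ne_of_gt hd1
  have hn2 : ((2*μ-1)*ρ+1) ≠ 0 := ne_of_gt hd2
  have hn3 : ((μ-1)*ρ+1) ≠ 0 := ne_of_gt hd3
  have e1 : (3*(μ-1)*ρ+1) * a = 1 := by rw [ha]; field_simp
  have e2 : (3*(μ-1)*ρ+1)*(a*b*ρ) - ρ*(a + a*b*ρ*(μ-2)) = 0 := by
    have eb : ((2*μ-1)*ρ+1) * b = 1 := by rw [hb]; field_simp
    linear_combination (a*ρ) * eb
  have e3 : (3*(μ-1)*ρ+1)*(4*a*b*c*ρ^2)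
      - ρ*(4*(a*b*ρ) + 4*a*b*c*ρ^2*(2*(μ-1))) = 0 := by
    rw [ha, hb, hc]; field_simp; ring
  constructor
  · rw [Matrix.sub_mul, Matrix.smul_mul, Matrix.one_mul, Matrix.smul_mul,
      Matrix.mul_add, Matrix.mul_add, Matrix.mul_smul, Matrix.mul_smul, Matrix.mul_smul,
      Matrix.mul_one, h2, hnj]
    match_scalars
    · linear_combination e1
    · linear_combination e2
    · linear_combination e3
  · rw [Matrix.mul_sub, Matrix.mul_smul, Matrix.mul_one, Matrix.mul_smul,
      Matrix.add_mul, Matrix.add_mul, Matrix.smul_mul, Matrix.smul_mul, Matrix.smul_mul,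
      Matrix.one_mul, h2, hjn]
    match_scalars
    · linear_combination e1
    · linear_combination e2
    · linear_combination e3

/-- with `M` the incidence matrix of `K_m` and `TᵀT = (3m-4)I - MMᵀ`, for
any `ρ > 0` the matrix `I + ρ(TᵀT + I)` is invertible with inverse
`a·I + abρ·MMᵀ + 4abcρ²·11ᵀ`, where `a = (3(m-1)ρ+1)⁻¹`, `b = ((2m-1)ρ+1)⁻¹`,
`c = ((m-1)ρ+1)⁻¹`. -/
theorem stmt16 (m : ℕ) (hm : 3 ≤ m) {ι : Type*} [Fintype ι] [DecidableEq ι]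
    (T : Matrix ι (EdgeIdx m) ℝ)
    (hT : Tᵀ * T =
        (3 * (m : ℝ) - 4) • (1 : Matrix (EdgeIdx m) (EdgeIdx m) ℝ) -
          incidence m * (incidence m)ᵀ)
    (ρ : ℝ) (hρ : 0 < ρ)
    (a b c : ℝ)
    (ha : a = (3 * ((m : ℝ) - 1) * ρ + 1)⁻¹)
    (hb : b = ((2 * (m : ℝ) - 1) * ρ + 1)⁻¹)
    (hc : c = (((m : ℝ) - 1) * ρ + 1)⁻¹) :
    IsUnit ((1 : Matrix (EdgeIdx m) (EdgeIdx m) ℝ) + ρ • (Tᵀ * T + 1)) ∧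
      ((1 : Matrix (EdgeIdx m) (EdgeIdx m) ℝ) + ρ • (Tᵀ * T + 1))⁻¹ =
        a • (1 : Matrix (EdgeIdx m) (EdgeIdx m) ℝ) +
          (a * b * ρ) • (incidence m * (incidence m)ᵀ) +
          (4 * a * b * c * ρ ^ 2) • Matrix.of (fun _ _ => (1 : ℝ)) := by
  have hm3 : (3:ℝ) ≤ (m:ℝ) := by exact_mod_cast hm
  have hA : (1 : Matrix (EdgeIdx m) (EdgeIdx m) ℝ) + ρ • (Tᵀ * T + 1)
      = (3*((m:ℝ)-1)*ρ+1) • (1 : Matrix (EdgeIdx m) (EdgeIdx m) ℝ)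
        - ρ • (incidence m * (incidence m)ᵀ) := by
    rw [hT]; module
  obtain ⟨hAB, hBA⟩ := inv_aux (incidence m * (incidence m)ᵀ)
    (Matrix.of (fun (_ _ : EdgeIdx m) => (1:ℝ))) (m:ℝ) hm3
    (hN2 m) (hNJ m) (hJN m) ρ a b c hρ ha hb hc
  rw [hA]
  exact ⟨⟨⟨_, _, hAB, hBA⟩, rfl⟩, Matrix.inv_eq_right_inv hAB⟩
end

section
/- Let h_ρ(x) = f(x) + (ρ/2)·dist(Dx, S)² with f differentiable and S closed (possibly nonconvex). If x is a local minimum of h_ρ, then 0 = ∇f(x) + ρ D^t(Dx - z) for every z in the set of nearest points S(x) = argmin_{s∈S} ‖Dx - s‖. -/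
/-- if `x` is a local minimum of
`h_ρ(x) = f(x) + (ρ/2)·dist(Dx,S)²` with `f` differentiable and `S` closed (possibly
nonconvex), then `0 = ∇f(x) + ρ·Dᵗ(Dx - z)` for every nearest point `z` of `Dx` in `S`. -/
theorem stmt19 {p m : ℕ} (f : EuclideanSpace ℝ (Fin p) → ℝ)
    (f' : EuclideanSpace ℝ (Fin p) → EuclideanSpace ℝ (Fin p))
    (hgrad : ∀ x, HasGradientAt f (f' x) x)
    (D : EuclideanSpace ℝ (Fin p) →L[ℝ] EuclideanSpace ℝ (Fin m))
    (S : Set (EuclideanSpace ℝ (Fin m))) (hS : IsClosed S) (hne : S.Nonempty)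
    (ρ : ℝ) (hρ : 0 < ρ)
    (x : EuclideanSpace ℝ (Fin p))
    (hx : IsLocalMin (fun w => f w + (ρ / 2) * (Metric.infDist (D w) S) ^ 2) x) :
    ∀ z ∈ S, (∀ s ∈ S, ‖D x - z‖ ≤ ‖D x - s‖) →
      (0 : EuclideanSpace ℝ (Fin p)) =
        f' x + ρ • (ContinuousLinearMap.adjoint D) (D x - z) := by
  intro z hz hznear
  set g : EuclideanSpace ℝ (Fin p) → ℝ := fun w => f w + (ρ / 2) * ‖D w - z‖ ^ 2 with hgdef
  -- the surrogate g majorizes h_ρ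
  have hle : ∀ w, f w + (ρ / 2) * (Metric.infDist (D w) S) ^ 2 ≤ g w := by
    intro w
    have h1 : Metric.infDist (D w) S ≤ ‖D w - z‖ := by
      rw [← dist_eq_norm]; exact Metric.infDist_le_dist_of_mem hz
    have h0 : (0 : ℝ) ≤ Metric.infDist (D w) S := Metric.infDist_nonneg
    have : (Metric.infDist (D w) S) ^ 2 ≤ ‖D w - z‖ ^ 2 := by nlinarith
    simp only [hgdef]
    nlinarith
  -- with equality at x
  have heqx : f x + (ρ / 2) * (Metric.infDist (D x) S) ^ 2 = g x := by
    have hdist : Metric.infDist (D x) S = ‖D x - z‖ := by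
      apply le_antisymm
      · rw [← dist_eq_norm]; exact Metric.infDist_le_dist_of_mem hz
      · by_contra hlt
        push_neg at hlt
        obtain ⟨y, hy, hdy⟩ := (Metric.infDist_lt_iff hne).1 hlt
        rw [dist_eq_norm] at hdy
        exact absurd (hznear y hy) (not_le.2 hdy)
    simp [hgdef, hdist]
  -- x is a local minimum of g
  have hming : IsLocalMin g x := by
    filter_upwards [hx] with w hw
    calc g x = f x + (ρ / 2) * (Metric.infDist (D x) S) ^ 2 := heqx.symm
      _ ≤ f w + (ρ / 2) * (Metric.infDist (D w) S) ^ 2 := hw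
      _ ≤ g w := hle w
  -- g has gradient f' x + ρ • D†(Dx - z) at x
  have hDsub : HasFDerivAt (fun w => D w - z) (D : EuclideanSpace ℝ (Fin p) →L[ℝ] _) x :=
    D.hasFDerivAt.sub_const z
  have hsq : HasFDerivAt (fun w => (inner ℝ (D w - z) (D w - z) : ℝ))
      ((fderivInnerCLM ℝ (D x - z, D x - z)).comp
        ((D : EuclideanSpace ℝ (Fin p) →L[ℝ] _).prod D)) x :=
    hDsub.inner ℝ hDsub
  have hGfull : HasFDerivAt g
      ((InnerProductSpace.toDual ℝ _ (f' x)) +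
        (ρ / 2) • ((fderivInnerCLM ℝ (D x - z, D x - z)).comp
          ((D : EuclideanSpace ℝ (Fin p) →L[ℝ] _).prod D))) x := by
    have h1 : HasFDerivAt f (InnerProductSpace.toDual ℝ _ (f' x)) x := (hgrad x).hasFDerivAt
    have h2 : HasFDerivAt (fun w => (ρ / 2) * ‖D w - z‖ ^ 2)
        ((ρ / 2) • ((fderivInnerCLM ℝ (D x - z, D x - z)).comp
          ((D : EuclideanSpace ℝ (Fin p) →L[ℝ] _).prod D))) x := by
      have : HasFDerivAt (fun w => ‖D w - z‖ ^ 2)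
          ((fderivInnerCLM ℝ (D x - z, D x - z)).comp
            ((D : EuclideanSpace ℝ (Fin p) →L[ℝ] _).prod D)) x := by
        refine hsq.congr_of_eventuallyEq ?_
        filter_upwards with w
        rw [real_inner_self_eq_norm_sq]
      exact this.const_mul (ρ / 2)
    exact h1.add h2
  -- identify the Fréchet derivative with the dual of the claimed gradient
  have hdualeq : ((InnerProductSpace.toDual ℝ _ (f' x)) +
        (ρ / 2) • ((fderivInnerCLM ℝ (D x - z, D x - z)).comp
          ((D : EuclideanSpace ℝ (Fin p) →L[ℝ] _).prod D)))
      = InnerProductSpace.toDual ℝ _ (f' x + ρ • (ContinuousLinearMap.adjoint D) (D x - z)) := by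
    ext v
    simp only [ContinuousLinearMap.add_apply, ContinuousLinearMap.smul_apply,
      ContinuousLinearMap.comp_apply, ContinuousLinearMap.prod_apply,
      fderivInnerCLM_apply, InnerProductSpace.toDual_apply_apply, inner_add_left,
      real_inner_smul_left, ContinuousLinearMap.adjoint_inner_left]
    rw [real_inner_comm (D v) (D x - z)]
    simp only [smul_eq_mul]
    ring
  have hG : HasFDerivAt g
      (InnerProductSpace.toDual ℝ _ (f' x + ρ • (ContinuousLinearMap.adjoint D) (D x - z))) x := by
    rw [← hdualeq]; exact hGfull
  have hzero := hming.hasFDerivAt_eq_zero hG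
  have := (InnerProductSpace.toDual ℝ (EuclideanSpace ℝ (Fin p))).injective
    (by rw [hzero, map_zero] :
      InnerProductSpace.toDual ℝ _ (f' x + ρ • (ContinuousLinearMap.adjoint D) (D x - z))
        = InnerProductSpace.toDual ℝ _ 0)
  exact this.symm
end
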